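/- Let k > ℓ ≥ 0 be integers, μ = ±1, and m₁, m₂ ∈ ℤ. If ℓ ∈ {0,1} then Σ(2^k, μ2^ℓ; m₁,m₂) = 0. Assume ℓ ≥ 2. If k − ℓ ≥ 3, then Σ(2^k, μ2^ℓ; m₁,m₂) = 2^ℓ·∑_{0 ≤ i ≤ ℓ−2, i ≡ ℓ (mod 2)} ( g₁(2^k, m₁, 2^{k−i})·g₁(2^ℓ, m₂, 2^{i+2}) + (−μ)·g₋₁(2^k, m₁, 2^{k−i})·g₋₁(2^ℓ, m₂, 2^{i+2}) ). If k − ℓ = 2, then Σ(2^k, μ2^ℓ; m₁,m₂) = (−1)^ℓ·2^ℓ·∑_{0 ≤ i ≤ ℓ−2, i ≡ ℓ (mod 2)} ( g₁(2^k, m₁, 2^{k−i})·g₁(2^ℓ, m₂, 2^{i+2}) + (−μ)·g₋₁(2^k, m₁, 2^{k−i})·g₋₁(2^ℓ, m₂, 2^{i+2}) ). If k − ℓ = 1, then Σ(2^k, μ2^ℓ; m₁,m₂) = (−μ)^ℓ·2^ℓ·∑_{0 ≤ i ≤ ℓ−2, i ≡ ℓ (mod 2)} ( g₁(2^k, m₁,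 2^{k−i})·g₋₁(2^ℓ, m₂, 2^{i+2}) + (−μ)·g₋₁(2^k, m₁, 2^{k−i})·g₁(2^ℓ, m₂, 2^{i+2}) ). -/

import Mathlib

/-- The Kronecker symbol at a prime `p`. -/
def kronPrime (a : ℤ) (p : ℕ) : ℤ :=
  if p = 2 then (if a % 2 = 0 then 0 else if a % 8 = 1 ∨ a % 8 = 7 then 1 else -1)
  else jacobiSym a p

/-- The Kronecker symbol `(a/n)`. -/
def kron (a n : ℤ) : ℤ :=
  if n = 0 then (if a = 1 ∨ a = -1 then 1 else 0)
  else (if a < 0 ∧ n < 0 then -1 else 1) *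
    n.natAbs.factorization.prod fun p e => kronPrime a p ^ e

/-- `e2pi r = exp(2πir)`. -/
noncomputable def e2pi (r : ℚ) : ℂ :=
  Complex.exp (2 * Real.pi * Complex.I * (r : ℂ))

/-- The set `S(A₁,A₂)` of normalized tuples `(B₁,C₁,B₂,C₂)` satisfying
`A₁C₂ + 4B₁B₂ + C₁A₂ = 0`, the gcd conditions, `Cᵢ ≡ -1 (mod 4)` and the
normalization inequalities. -/
def PlSet (A₁ A₂ : ℤ) : Set (ℤ × ℤ × ℤ × ℤ) :=
  {v | A₁ * v.2.2.2 + 4 * v.1 * v.2.2.1 + v.2.1 * A₂ = 0 ∧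
    Int.gcd A₁ (Int.gcd v.1 v.2.1) = 1 ∧
    Int.gcd A₂ (Int.gcd v.2.2.1 v.2.2.2) = 1 ∧
    v.2.1 ≡ -1 [ZMOD 4] ∧ v.2.2.2 ≡ -1 [ZMOD 4] ∧
    0 ≤ (v.1 : ℚ) / (A₁ : ℚ) ∧ (v.1 : ℚ) / (A₁ : ℚ) < 1 ∧
    0 ≤ (v.2.2.1 : ℚ) / (A₂ : ℚ) ∧ (v.2.2.1 : ℚ) / (A₂ : ℚ) < 1 ∧
    0 ≤ (v.2.2.2 : ℚ) / (4 * (A₂ : ℚ)) ∧ (v.2.2.2 : ℚ) / (4 * (A₂ : ℚ)) < 1}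

/-- The splitting `s` in Plücker coordinates. -/
def ssplit (A₁ A₂ : ℤ) (v : ℤ × ℤ × ℤ × ℤ) : ℤ :=
  let D : ℤ := Int.gcd A₁ A₂
  let D₁ : ℤ := Int.gcd D v.1
  let D₂ : ℤ := D / D₁
  kron (kron (-1) (v.1 / D₁)) (-(A₁ * A₂)) * kron (A₁ / D) (A₂ / D) *
    kron (v.1 / D₁) (A₁ / D) * kron (4 * v.2.2.1 / D₂) (A₂.sign * A₂ / D) *
    kron D₁ v.2.1 * kron D₂ v.2.2.2

/-- The exponential sum `Σ(A₁,A₂;m₁,m₂)`. -/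
noncomputable def SigmaExp (A₁ A₂ m₁ m₂ : ℤ) : ℂ :=
  ∑' v : ↥(PlSet A₁ A₂),
    (ssplit A₁ A₂ v.val : ℂ) *
      e2pi ((m₁ : ℚ) * ((v.val.1 : ℚ) / (A₁ : ℚ)) + (m₂ : ℚ) * ((v.val.2.2.1 : ℚ) / (A₂ : ℚ)))

/-- The Gauss sum `g_η(2^i, m, 2^t)` restricted to `x ≡ η (mod 4)`. -/
noncomputable def gaussGEta (η : ℤ) (i : ℕ) (m : ℤ) (t : ℕ) : ℂ :=
  ∑ x ∈ Finset.filter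
      (fun x => Nat.gcd x (2 ^ max t 2) = 1 ∧ (x : ZMod 4) = (η : ZMod 4))
      (Finset.range (2 ^ max t 2)),
    (kron (x : ℤ) 2 ^ i : ℂ) * e2pi ((m : ℚ) * (x : ℚ) / ((2 : ℚ) ^ t))

-- A2 : formula for kron x 2
lemma kron_two (x : ℤ) : kron x 2 =
    if x % 2 = 0 then 0 else if x % 8 = 1 ∨ x % 8 = 7 then 1 else -1 := by
  rw [kron]
  have h2 : (2:ℤ).natAbs = 2 := rfl
  rw [if_neg (by norm_num), h2, Nat.Prime.factorization (by norm_num)]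
  rw [Finsupp.prod_single_index (by simp)]
  simp [kronPrime]

-- kron x 2 depends only on x % 8
lemma kron_two_emod (x : ℤ) : kron x 2 = kron (x % 8) 2 := by
  rw [kron_two, kron_two, Int.emod_emod_of_dvd x (by norm_num : (2:ℤ) ∣ 8),
    Int.emod_emod_of_dvd x (by norm_num : (8:ℤ) ∣ 8)]

lemma kron_two_mul (x y : ℤ) : kron (x*y) 2 = kron x 2 * kron y 2 := by
  conv_lhs => rw [kron_two_emod, Int.mul_emod]
  rw [kron_two_emod x, kron_two_emod y]
  have hx0 : 0 ≤ x % 8 := Int.emod_nonneg x (by norm_num)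
  have hx8 : x % 8 < 8 := Int.emod_lt_of_pos x (by norm_num)
  have hy0 : 0 ≤ y % 8 := Int.emod_nonneg y (by norm_num)
  have hy8 : y % 8 < 8 := Int.emod_lt_of_pos y (by norm_num)
  set a := x % 8; set b := y % 8
  clear_value a b
  interval_cases a <;> interval_cases b <;> simp [kron_two]

lemma kron_two_neg (x : ℤ) : kron (-x) 2 = kron x 2 := by
  have h : -x = -(x % 8) + 8 * (-(x / 8)) := by
    have := Int.emod_add_mul_ediv x 8; linarith
  rw [h, kron_two_emod, Int.add_mul_emod_self_left, ← kron_two_emod, kron_two_emod x]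
  have hx0 : 0 ≤ x % 8 := Int.emod_nonneg x (by norm_num)
  have hx8 : x % 8 < 8 := Int.emod_lt_of_pos x (by norm_num)
  set a := x % 8; clear_value a
  interval_cases a <;> simp [kron_two]

lemma kron_one_right (a : ℤ) : kron a 1 = 1 := by rw [kron]; simp

lemma kron_neg_one_right (a : ℤ) (h : 0 ≤ a) : kron a (-1) = 1 := by
  rw [kron]; simp [not_lt.2 h]

lemma kron_eq_kronPrime_two (a : ℤ) : kron a 2 = kronPrime a 2 := by
  rw [kron, if_neg (by norm_num), show (2:ℤ).natAbs = 2 from rfl,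
    Nat.Prime.factorization (by norm_num), Finsupp.prod_single_index (by simp)]
  simp

lemma kron_two_pow_right (a : ℤ) (t : ℕ) : kron a (2^t) = kron a 2 ^ t := by
  rw [kron, if_neg (by exact pow_ne_zero t two_ne_zero), kron_eq_kronPrime_two]
  have h1 : ((2:ℤ)^t).natAbs = 2^t := by simp [Int.natAbs_pow]
  rw [h1, Nat.Prime.factorization_pow (by norm_num), Finsupp.prod_single_index (by simp)]
  have : ¬(a < 0 ∧ (2:ℤ)^t < 0) := by
    rintro ⟨-, h⟩; exact absurd h (not_lt.2 (by positivity))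
  rw [if_neg this, one_mul]

lemma kron_odd_right (a c : ℤ) (hc : c % 2 = 1) :
    kron a c = (if a < 0 ∧ c < 0 then -1 else 1) * jacobiSym a c.natAbs := by
  have hc0 : c ≠ 0 := by rintro rfl; simp at hc
  have hna : c.natAbs ≠ 0 := Int.natAbs_ne_zero.2 hc0
  have hodd : Odd c.natAbs := by
    rw [Int.natAbs_odd, Int.odd_iff]; exact hc
  rw [kron, if_neg hc0]
  congr 1
  rw [Nat.multiplicative_factorization (jacobiSym a)
    (fun x y h => by
      rcases Nat.eq_zero_or_pos x with rfl | hx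
      · have : y = 1 := by simpa using h.symm
        subst this; simp [jacobiSym.zero_right, jacobiSym.one_right]
      rcases Nat.eq_zero_or_pos y with rfl | hy
      · have : x = 1 := by simpa using h
        subst this; simp [jacobiSym.zero_right, jacobiSym.one_right]
      · have : NeZero x := ⟨hx.ne'⟩
        have : NeZero y := ⟨hy.ne'⟩
        exact jacobiSym.mul_right a x y)
    (jacobiSym.one_right a) hna]
  apply Finsupp.prod_congr
  intro p hp
  rw [Nat.support_factorization] at hp
  have hpp : p.Prime := Nat.prime_of_mem_primeFactors hp
  have hp2 : p ≠ 2 := by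
    rintro rfl
    have : 2 ∣ c.natAbs := Nat.dvd_of_mem_primeFactors hp
    rw [Nat.odd_iff] at hodd; omega
  rw [jacobiSym.pow_right, kronPrime, if_neg hp2]

lemma kron_two_eq_chi8 (c : ℤ) : kron c 2 = ZMod.χ₈ (c : ZMod 8) := by
  have hcast : ((c % 8 : ℤ) : ZMod 8) = (c : ZMod 8) := by
    have h : c % 8 ≡ c [ZMOD ((8:ℕ):ℤ)] := by
      show _ % _ = _ % _
      push_cast
      exact Int.emod_emod_of_dvd c dvd_rfl
    exact (ZMod.intCast_eq_intCast_iff _ _ _).2 h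
  rw [kron_two_emod, ← hcast]
  have h0 : 0 ≤ c % 8 := Int.emod_nonneg c (by norm_num)
  have h8 : c % 8 < 8 := Int.emod_lt_of_pos c (by norm_num)
  set a := c % 8; clear_value a
  interval_cases a <;> rw [kron_two] <;> decide

lemma chi8_neg (x : ZMod 8) : ZMod.χ₈ (-x) = ZMod.χ₈ x := by revert x; decide

lemma chi8_natAbs (c : ℤ) : ZMod.χ₈ ((c.natAbs : ℕ) : ZMod 8) = ZMod.χ₈ (c : ZMod 8) := by
  have h1 : ((c.natAbs : ℕ) : ZMod 8) = ((c.natAbs : ℤ) : ZMod 8) := (Int.cast_natCast _).symm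
  rcases le_or_gt 0 c with h | h
  · rw [h1, Int.natAbs_of_nonneg h]
  · rw [h1, Int.ofNat_natAbs_of_nonpos h.le, Int.cast_neg]
    exact chi8_neg _

lemma kron_two_pow_left (t : ℕ) (c : ℤ) (hc : c % 2 = 1) : kron (2^t) c = kron c 2 ^ t := by
  have hodd : Odd c.natAbs := by rw [Int.natAbs_odd, Int.odd_iff]; exact hc
  rw [kron_odd_right _ c hc, if_neg (by rintro ⟨h, -⟩; exact absurd h (not_lt.2 (by positivity))),
    one_mul, jacobiSym.pow_left, jacobiSym.at_two hodd, kron_two_eq_chi8, chi8_natAbs]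

lemma chi4_natAbs (c : ℤ) (h : 0 ≤ c) : ZMod.χ₄ ((c.natAbs : ℕ) : ZMod 4) = ZMod.χ₄ (c : ZMod 4) := by
  have h1 : ((c.natAbs : ℕ) : ZMod 4) = ((c.natAbs : ℤ) : ZMod 4) := (Int.cast_natCast _).symm
  rw [h1, Int.natAbs_of_nonneg h]

lemma kron_neg_one_left (c : ℤ) (hc : c % 2 = 1) (hpos : 0 < c) :
    kron (-1) c = ZMod.χ₄ (c : ZMod 4) := by
  have hodd : Odd c.natAbs := by rw [Int.natAbs_odd, Int.odd_iff]; exact hc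
  rw [kron_odd_right _ c hc, if_neg (by rintro ⟨-, h⟩; exact absurd h (not_lt.2 hpos.le)),
    one_mul, jacobiSym.at_neg_one hodd, chi4_natAbs c hpos.le]

lemma kron_one_left (n : ℤ) : kron 1 n = 1 := by
  rw [kron]
  split
  · simp
  · rw [if_neg (by norm_num), one_mul]
    have h : (n.natAbs.factorization.prod fun p e => kronPrime 1 p ^ e) =
        n.natAbs.factorization.prod fun p e => 1 := by
      apply Finsupp.prod_congr
      intro p hp
      have h2 : kronPrime 1 p = 1 := by
        rw [kronPrime]
        split
        · norm_num
        · exact jacobiSym.one_left p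
      rw [h2, one_pow]
    rw [h]; simp [Finsupp.prod]

lemma kron_neg_one_big (k ℓ : ℕ) (μ : ℤ) (hμ : μ = 1 ∨ μ = -1) :
    kron (-1) (-(2^k*(μ*2^ℓ))) = -μ := by
  have hkp : kronPrime (-1) 2 = 1 := by decide
  have hpos : (0:ℤ) < 2^k * 2^ℓ := by positivity
  rcases hμ with rfl | rfl
  · have habs : (-(2^k*((1:ℤ)*2^ℓ))).natAbs = 2^(k+ℓ) := by
      simp [Int.natAbs_neg, Int.natAbs_mul, Int.natAbs_pow, pow_add]
    have hne : (-(2^k*((1:ℤ)*2^ℓ))) ≠ 0 := by simp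
    rw [kron, if_neg hne, habs, Nat.Prime.factorization_pow (by norm_num),
      Finsupp.prod_single_index (by simp), hkp, one_pow, mul_one,
      if_pos ⟨by norm_num, by rw [neg_lt, neg_zero]; simpa using hpos⟩]
  · have habs : (-(2^k*((-1:ℤ)*2^ℓ))).natAbs = 2^(k+ℓ) := by
      simp [Int.natAbs_neg, Int.natAbs_mul, Int.natAbs_pow, pow_add]
    have hne : (-(2^k*((-1:ℤ)*2^ℓ))) ≠ 0 := by simp
    rw [kron, if_neg hne, habs, Nat.Prime.factorization_pow (by norm_num),
      Finsupp.prod_single_index (by simp), hkp, one_pow, mul_one,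
      if_neg (by rintro ⟨-, h⟩; simp at h; nlinarith)]
    norm_num

lemma kron_two_pm (c : ℤ) (hc : c % 2 = 1) : kron c 2 = 1 ∨ kron c 2 = -1 := by
  rw [kron_two, if_neg (by omega)]; split <;> simp

lemma pm_pow_parity (x : ℤ) (h : x = 1 ∨ x = -1) (a b : ℕ) (hab : a % 2 = b % 2) :
    x ^ a = x ^ b := by
  rcases h with rfl | rfl
  · simp
  · rcases Nat.even_or_odd a with ha | ha
    · rw [ha.neg_one_pow, (Nat.even_iff.2 (by rw [← hab]; exact Nat.even_iff.1 ha)).neg_one_pow]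
    · rw [ha.neg_one_pow, (Nat.odd_iff.2 (by rw [← hab]; exact Nat.odd_iff.1 ha)).neg_one_pow]

/- ### Part B : parametrization -/

def Pmap (k ℓ : ℕ) (μ : ℤ) (x : ℕ × ℕ × ℕ × ℕ) : ℤ × ℤ × ℤ × ℤ :=
  ((2:ℤ)^x.1 * x.2.1, -((2:ℤ)^(k-ℓ) * x.2.2.2 + x.2.1 * x.2.2.1),
    μ * ((2:ℤ)^(ℓ-2-x.1) * x.2.2.1), μ * x.2.2.2)

def Fpred (k ℓ : ℕ) (μ : ℤ) (x : ℕ × ℕ × ℕ × ℕ) : Prop :=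
  x.2.1 % 2 = 1 ∧ x.2.1 < 2^(k - x.1) ∧ x.2.2.1 % 2 = 1 ∧ x.2.2.1 < 2^(x.1+2) ∧
  ((x.2.2.2 : ZMod 4) = -(μ : ZMod 4)) ∧
  ((x.2.1 : ZMod 4) * (x.2.2.1 : ZMod 4) + 2^(k-ℓ) * (x.2.2.2 : ZMod 4) = 1)

instance (k ℓ : ℕ) (μ : ℤ) : DecidablePred (Fpred k ℓ μ) := fun x => by
  unfold Fpred; infer_instance

def Fdom (k ℓ : ℕ) (μ : ℤ) : Finset (ℕ × ℕ × ℕ × ℕ) :=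
  ((Finset.range (ℓ-1)) ×ˢ (Finset.range (2^k)) ×ˢ (Finset.range (2^ℓ)) ×ˢ
    (Finset.range (2^(ℓ+2)))).filter (Fpred k ℓ μ)

lemma mem_Fdom {k ℓ : ℕ} {μ : ℤ} {x : ℕ × ℕ × ℕ × ℕ} :
    x ∈ Fdom k ℓ μ ↔ (x.1 < ℓ-1 ∧ x.2.1 < 2^k ∧ x.2.2.1 < 2^ℓ ∧ x.2.2.2 < 2^(ℓ+2)) ∧
      Fpred k ℓ μ x := by
  simp [Fdom, Finset.mem_filter, Finset.mem_product, and_assoc]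

lemma two_adic_unique' {a b x y : ℕ} (hx : x % 2 = 1) (hy : y % 2 = 1)
    (h : 2^a * x = 2^b * y) (hab : a ≤ b) : a = b ∧ x = y := by
  have hc : x = 2^(b-a) * y := by
    have h2 : 2^a * x = 2^a * (2^(b-a) * y) := by
      rw [h, ← mul_assoc, ← pow_add]
      congr 2
      omega
    exact Nat.eq_of_mul_eq_mul_left (Nat.two_pow_pos a) h2
  rcases Nat.eq_zero_or_pos (b - a) with h0 | h0
  · constructor
    · omega
    · rw [hc, h0, pow_zero, one_mul]
  · exfalso
    have : 2 ∣ x := hc ▸ Dvd.dvd.mul_right (dvd_pow_self 2 (by omega)) y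
    omega
lemma two_adic_unique {a b x y : ℕ} (hx : x % 2 = 1) (hy : y % 2 = 1)
    (h : 2^a * x = 2^b * y) : a = b ∧ x = y := by
  rcases le_total a b with hab | hab
  · exact two_adic_unique' hx hy h hab
  · obtain ⟨h1, h2⟩ := two_adic_unique' hy hx h.symm hab
    exact ⟨h1.symm, h2.symm⟩

lemma rat_bounds {B A : ℤ} (hA : 0 < A) :
    (0 ≤ (B:ℚ)/(A:ℚ) ∧ (B:ℚ)/(A:ℚ) < 1) ↔ (0 ≤ B ∧ B < A) := by
  have hAq : (0:ℚ) < (A:ℚ) := by exact_mod_cast hA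
  rw [div_lt_one hAq, le_div_iff₀ hAq, zero_mul]
  constructor <;> intro ⟨h1, h2⟩ <;> exact ⟨by exact_mod_cast h1, by exact_mod_cast h2⟩

lemma gcd_pow_two_odd {k : ℕ} {g : ℕ} (hg : g % 2 = 1) :
    Nat.gcd (2^k) g = 1 := by
  exact Nat.Coprime.pow_left k (((Nat.prime_two.coprime_iff_not_dvd).2 (by omega)))

lemma int_modeq_iff_zmod4 (a b : ℤ) : a ≡ b [ZMOD (4:ℤ)] ↔ (a : ZMod 4) = (b : ZMod 4) := by
  have := (ZMod.intCast_eq_intCast_iff a b 4)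
  rw [this]
  norm_num

lemma plset_empty (k ℓ : ℕ) (hℓ : ℓ ≤ 1) (hkℓ : ℓ < k) (μ : ℤ) (hμ : μ = 1 ∨ μ = -1) :
    PlSet ((2:ℤ)^k) (μ * 2^ℓ) = ∅ := by
  ext v
  simp only [PlSet, Set.mem_setOf_eq, Set.mem_empty_iff_false, iff_false, not_and]
  intro heq _ _ hC1
  rw [int_modeq_iff_zmod4] at hC1
  exfalso
  have hC1' : v.2.1 % 4 = 3 := by
    have := (ZMod.intCast_eq_intCast_iff v.2.1 (-1) 4).1 (by exact_mod_cast hC1)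
    have h2 := this
    unfold Int.ModEq at h2
    omega
  interval_cases ℓ
  · -- ℓ = 0
    obtain ⟨t, ht⟩ : ∃ t : ℤ, (2:ℤ)^k = 2 * t := ⟨2^(k-1), by rw [← pow_succ']; congr 1; omega⟩
    rw [pow_zero, mul_one] at heq
    rcases hμ with rfl | rfl
    · have h' : 2*(t * v.2.2.2) + 4*(v.1 * v.2.2.1) + v.2.1 = 0 := by
        rw [ht] at heq; linear_combination heq
      generalize t * v.2.2.2 = u at h'
      generalize v.1 * v.2.2.1 = w at h'
      omega
    · have h' : 2*(t * v.2.2.2) + 4*(v.1 * v.2.2.1) - v.2.1 = 0 := by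
        rw [ht] at heq; linear_combination heq
      generalize t * v.2.2.2 = u at h'
      generalize v.1 * v.2.2.1 = w at h'
      omega
  · -- ℓ = 1
    obtain ⟨t, ht⟩ : ∃ t : ℤ, (2:ℤ)^k = 4 * t := ⟨2^(k-2), by
      rw [show (4:ℤ) = 2^2 by norm_num, ← pow_add]; congr 1; omega⟩
    rw [pow_one] at heq
    rcases hμ with rfl | rfl
    · have h' : 4*(t * v.2.2.2) + 4*(v.1 * v.2.2.1) + 2*v.2.1 = 0 := by
        rw [ht] at heq; linear_combination heq
      generalize t * v.2.2.2 = u at h'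
      generalize v.1 * v.2.2.1 = w at h'
      omega
    · have h' : 4*(t * v.2.2.2) + 4*(v.1 * v.2.2.1) - 2*v.2.1 = 0 := by
        rw [ht] at heq; linear_combination heq
      generalize t * v.2.2.2 = u at h'
      generalize v.1 * v.2.2.1 = w at h'
      omega

lemma zmod4_nat (γ c : ℕ) (hc : c < 4) : ((γ : ZMod 4) = ((c:ℕ) : ZMod 4)) ↔ γ % 4 = c := by
  rw [ZMod.natCast_eq_natCast_iff]
  unfold Nat.ModEq
  omega

lemma int_gcd_nat (a : ℤ) (g : ℕ) : Int.gcd a (g:ℤ) = Nat.gcd a.natAbs g := by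
  rw [Int.gcd, Int.natAbs_natCast]

lemma gamma_mod (μ : ℤ) (hμ : μ = 1 ∨ μ = -1) (γ : ℕ) (h : (γ : ZMod 4) = -(μ : ZMod 4)) :
    γ % 4 = (if μ = 1 then 3 else 1) := by
  rcases hμ with rfl | rfl
  · rw [if_pos rfl]
    rw [show -((1:ℤ) : ZMod 4) = ((3:ℕ) : ZMod 4) by decide] at h
    exact (zmod4_nat γ 3 (by norm_num)).1 h
  · rw [if_neg (by norm_num)]
    rw [show -((-1:ℤ) : ZMod 4) = ((1:ℕ) : ZMod 4) by decide] at h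
    exact (zmod4_nat γ 1 (by norm_num)).1 h

lemma plset_eq (k ℓ : ℕ) (hℓ : 2 ≤ ℓ) (hkℓ : ℓ < k) (μ : ℤ) (hμ : μ = 1 ∨ μ = -1) :
    PlSet ((2:ℤ)^k) (μ * 2^ℓ) = ↑((Fdom k ℓ μ).image (Pmap k ℓ μ)) := by
  have hμ2 : μ * μ = 1 := by rcases hμ with rfl | rfl <;> norm_num
  have hμ0 : (μ:ℚ) ≠ 0 := by rcases hμ with rfl | rfl <;> norm_num
  ext v
  simp only [Finset.coe_image, Set.mem_image, Finset.mem_coe]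
  constructor
  · rintro ⟨heq, hg1, hg2, hC1, hC2, h1, h2, h3, h4, h5, h6⟩
    obtain ⟨B₁, C₁, B₂, C₂⟩ := v
    simp only at heq hg1 hg2 hC1 hC2 h1 h2 h3 h4 h5 h6 ⊢
    have he3 : (2:ℤ)^(k-ℓ) * 2^ℓ = 2^k := by rw [← pow_add]; congr 1; omega
    have hB1 : 0 ≤ B₁ ∧ B₁ < 2^k := (rat_bounds (by positivity)).1 ⟨h1, h2⟩
    have hrw2 : (B₂:ℚ)/((μ * 2^ℓ : ℤ):ℚ) = ((μ*B₂ : ℤ):ℚ)/(((2:ℤ)^ℓ : ℤ):ℚ) := by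
      push_cast
      rcases hμ with rfl | rfl <;> push_cast <;> ring
    rw [hrw2] at h3 h4
    have hB2 : 0 ≤ μ*B₂ ∧ μ*B₂ < 2^ℓ := (rat_bounds (by positivity)).1 ⟨h3, h4⟩
    have hrw3 : (C₂:ℚ)/(4 * ((μ * 2^ℓ : ℤ):ℚ)) = ((μ*C₂ : ℤ):ℚ)/(((2:ℤ)^(ℓ+2) : ℤ):ℚ) := by
      have h42 : ((2:ℚ))^(ℓ+2) = 4 * 2^ℓ := by rw [pow_add]; ring
      push_cast
      rw [h42]
      rcases hμ with rfl | rfl <;> push_cast <;> ring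
    rw [hrw3] at h5 h6
    have hG : 0 ≤ μ*C₂ ∧ μ*C₂ < 2^(ℓ+2) := (rat_bounds (by positivity)).1 ⟨h5, h6⟩
    have hC1' : C₁ % 4 = 3 := by
      have := (ZMod.intCast_eq_intCast_iff C₁ (-1) 4).1
        (by rw [int_modeq_iff_zmod4] at hC1; exact_mod_cast hC1)
      unfold Int.ModEq at this; omega
    have hC2' : C₂ % 4 = 3 := by
      have := (ZMod.intCast_eq_intCast_iff C₂ (-1) 4).1
        (by rw [int_modeq_iff_zmod4] at hC2; exact_mod_cast hC2)
      unfold Int.ModEq at this; omega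
    set n1 : ℕ := B₁.toNat with hn1def
    set n2 : ℕ := (μ*B₂).toNat with hn2def
    set γn : ℕ := (μ*C₂).toNat with hγdef
    have hn1c : (n1:ℤ) = B₁ := Int.toNat_of_nonneg hB1.1
    have hn2c : (n2:ℤ) = μ*B₂ := Int.toNat_of_nonneg hB2.1
    have hγc : (γn:ℤ) = μ*C₂ := Int.toNat_of_nonneg hG.1
    have heq2 : 4*(n1:ℤ)*(n2:ℤ) = 2^ℓ * (-C₁ - 2^(k-ℓ)*(γn:ℤ)) := by
      rw [hn1c, hn2c, hγc]
      linear_combination μ*heq - (2:ℤ)^ℓ*C₁*hμ2 + (μ*C₂)*he3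
    have hcodd : (-C₁ - 2^(k-ℓ)*(γn:ℤ)) % 2 = 1 := by
      obtain ⟨s, hs⟩ : ∃ s:ℤ, (2:ℤ)^(k-ℓ) = 2*s := ⟨2^(k-ℓ-1), by rw [← pow_succ']; congr 1; omega⟩
      rw [hs, mul_assoc]
      generalize s * (γn:ℤ) = u
      omega
    have hcpos : 0 < -C₁ - 2^(k-ℓ)*(γn:ℤ) := by
      rcases lt_trichotomy (-C₁ - 2^(k-ℓ)*(γn:ℤ)) 0 with h | h | h
      · exfalso
        have hlhs : 0 ≤ 4*(n1:ℤ)*(n2:ℤ) := by positivity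
        have : (2:ℤ)^ℓ * (-C₁ - 2^(k-ℓ)*(γn:ℤ)) < 0 :=
          mul_neg_of_pos_of_neg (by positivity) h
        omega
      · omega
      · exact h
    set c : ℤ := -C₁ - 2^(k-ℓ)*(γn:ℤ) with hcdef
    set cn : ℕ := c.toNat with hcndef
    have hcnc : (cn:ℤ) = c := Int.toNat_of_nonneg hcpos.le
    have hcn2 : cn % 2 = 1 := by omega
    have heqn : 4*n1*n2 = 2^ℓ * cn := by
      have : ((4*n1*n2 : ℕ):ℤ) = ((2^ℓ * cn : ℕ):ℤ) := by push_cast [hcnc]; linarith [heq2]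
      exact_mod_cast this
    have hn1ne : n1 ≠ 0 := by
      rintro h0
      rw [h0] at heqn
      simp at heqn
      omega
    have hn2ne : n2 ≠ 0 := by
      rintro h0
      rw [h0] at heqn
      simp at heqn
      omega
    obtain ⟨j, b₁, hb1nd, hn1e⟩ := Nat.exists_eq_pow_mul_and_not_dvd hn1ne 2 (by norm_num)
    obtain ⟨i, b₂, hb2nd, hn2e⟩ := Nat.exists_eq_pow_mul_and_not_dvd hn2ne 2 (by norm_num)
    have hodd1 : b₁ % 2 = 1 := by
      rcases Nat.mod_two_eq_zero_or_one b₁ with h | h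
      · exact absurd (Nat.dvd_of_mod_eq_zero h) hb1nd
      · exact h
    have hodd2 : b₂ % 2 = 1 := by
      rcases Nat.mod_two_eq_zero_or_one b₂ with h | h
      · exact absurd (Nat.dvd_of_mod_eq_zero h) hb2nd
      · exact h
    have hbbodd : (b₁*b₂) % 2 = 1 := by rw [Nat.mul_mod, hodd1, hodd2]
    have hkey : 2^(j+i+2)*(b₁*b₂) = 2^ℓ * cn := by
      rw [← heqn, hn1e, hn2e, pow_add, pow_add]; ring
    obtain ⟨hje, hbe⟩ := two_adic_unique hbbodd hcn2 hkey
    have hn1lt : n1 < 2^k := by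
      have : (n1:ℤ) < 2^k := by rw [hn1c]; exact hB1.2
      exact_mod_cast this
    have hn2lt : n2 < 2^ℓ := by
      have : (n2:ℤ) < 2^ℓ := by rw [hn2c]; exact hB2.2
      exact_mod_cast this
    have hγlt : γn < 2^(ℓ+2) := by
      have : (γn:ℤ) < 2^(ℓ+2) := by rw [hγc]; exact hG.2
      exact_mod_cast this
    have hjle : j + 2 ≤ ℓ := by omega
    have hilej : i = ℓ - 2 - j := by omega
    have hC1eq : C₁ = -(2^(k-ℓ)*(γn:ℤ) + (b₁:ℤ)*(b₂:ℤ)) := by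
      have hbz : ((b₁*b₂ : ℕ):ℤ) = (cn:ℤ) := by exact_mod_cast congrArg (Nat.cast (R := ℤ)) hbe
      push_cast at hbz
      rw [hcnc] at hbz
      rw [hcdef] at hbz
      linarith [hbz]
    have hγ4 : ((γn:ℕ) : ZMod 4) = -(μ : ZMod 4) := by
      have h1 : ((γn:ℤ) : ZMod 4) = ((μ*C₂ : ℤ) : ZMod 4) := by rw [hγc]
      have h2 : ((C₂ : ℤ) : ZMod 4) = ((-1 : ℤ) : ZMod 4) := by
        rw [ZMod.intCast_eq_intCast_iff]
        rw [int_modeq_iff_zmod4] at hC2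
        rw [ZMod.intCast_eq_intCast_iff] at hC2
        exact_mod_cast hC2
      push_cast at h1 h2 ⊢
      rw [h1, h2]
      ring
    refine ⟨(j, b₁, b₂, γn), ?_, ?_⟩
    · rw [mem_Fdom]
      refine ⟨⟨by omega, ?_, ?_, hγlt⟩, hodd1, ?_, hodd2, ?_, hγ4, ?_⟩
      · calc b₁ ≤ 2^j * b₁ := Nat.le_mul_of_pos_left _ (Nat.two_pow_pos j)
          _ = n1 := hn1e.symm
          _ < 2^k := hn1lt
      · calc b₂ ≤ 2^i * b₂ := Nat.le_mul_of_pos_left _ (Nat.two_pow_pos i)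
          _ = n2 := hn2e.symm
          _ < 2^ℓ := hn2lt
      · -- b₁ < 2^(k-j)
        have : 2^j * b₁ < 2^j * 2^(k-j) := by
          rw [← pow_add, show j + (k-j) = k by omega, ← hn1e]
          exact hn1lt
        exact (Nat.mul_lt_mul_left (Nat.two_pow_pos j)).1 this
      · -- b₂ < 2^(j+2)
        have : 2^i * b₂ < 2^i * 2^(j+2) := by
          rw [← pow_add, show i + (j+2) = ℓ by omega, ← hn2e]
          exact hn2lt
        exact (Nat.mul_lt_mul_left (Nat.two_pow_pos i)).1 this
      · -- last condition
        have hcast : ((C₁ : ℤ) : ZMod 4) = ((-1:ℤ) : ZMod 4) := by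
          rw [ZMod.intCast_eq_intCast_iff]
          rw [int_modeq_iff_zmod4] at hC1
          rw [ZMod.intCast_eq_intCast_iff] at hC1
          exact_mod_cast hC1
        rw [hC1eq] at hcast
        push_cast at hcast
        linear_combination (-1 : ZMod 4) * hcast
    · -- Pmap equals v
      show ((2:ℤ)^j * (b₁:ℤ), -((2:ℤ)^(k-ℓ) * (γn:ℤ) + (b₁:ℤ) * (b₂:ℤ)),
        μ * ((2:ℤ)^(ℓ-2-j) * (b₂:ℤ)), μ * (γn:ℤ)) = (B₁, C₁, B₂, C₂)
      have hc1 : (2:ℤ)^j * (b₁:ℤ) = B₁ := by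
        rw [← hn1c, hn1e]; push_cast; ring
      have hc3 : μ * ((2:ℤ)^(ℓ-2-j) * (b₂:ℤ)) = B₂ := by
        rw [← hilej, show ((2:ℤ)^i * (b₂:ℤ)) = (n2:ℤ) by rw [hn2e]; push_cast; ring, hn2c]
        linear_combination B₂ * hμ2
      have hc4 : μ * (γn:ℤ) = C₂ := by
        rw [hγc]
        linear_combination C₂ * hμ2
      rw [hc1, hc3, hc4, ← hC1eq]
  · rintro ⟨x, hx, rfl⟩
    obtain ⟨j, b₁, b₂, γ⟩ := x
    rw [mem_Fdom] at hx
    obtain ⟨⟨hj, hb1k, hb2l, hγl⟩, hodd1, hb1, hodd2, hb2, hγ4, hlast⟩ := hx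
    have hj2 : j + 2 ≤ ℓ := by omega
    have hγ2 : γ % 2 = 1 := by
      have := gamma_mod μ hμ γ hγ4
      rcases hμ with rfl | rfl <;> simp at this <;> omega
    have hbb : (b₁ * b₂) % 2 = 1 := by
      rw [Nat.mul_mod, hodd1, hodd2]
    have he3 : (2:ℤ)^(k-ℓ) * 2^ℓ = 2^k := by rw [← pow_add]; congr 1; omega
    have he1 : (2:ℤ)^(ℓ-2-j) * 2^j = 2^(ℓ-2) := by rw [← pow_add]; congr 1; omega
    have he2 : (4:ℤ) * 2^(ℓ-2) = 2^ℓ := by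
      rw [show (4:ℤ) = 2^2 by norm_num, ← pow_add]; congr 1; omega
    have hC1odd : (-((2:ℤ)^(k-ℓ)*γ + b₁*b₂)) % 2 = 1 := by
      obtain ⟨s, hs⟩ : ∃ s:ℤ, (2:ℤ)^(k-ℓ) = 2*s := ⟨2^(k-ℓ-1), by rw [← pow_succ']; congr 1; omega⟩
      have hbbz : ((b₁:ℤ)*b₂) % 2 = 1 := by exact_mod_cast hbb
      rw [hs]
      generalize hsg : s * (γ:ℤ) = u
      generalize (b₁:ℤ)*(b₂:ℤ) = w at hbbz ⊢
      have : (2:ℤ)*s*γ = 2*u := by rw [mul_assoc, hsg]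
      rw [this]
      omega
    refine ⟨?_, ?_, ?_, ?_, ?_, ?_, ?_, ?_, ?_, ?_, ?_⟩
    · -- equation
      show (2:ℤ)^k * (μ * γ) + 4 * ((2:ℤ)^j * b₁) * (μ * ((2:ℤ)^(ℓ-2-j) * b₂)) +
          (-((2:ℤ)^(k-ℓ)*γ + b₁*b₂)) * (μ * 2^ℓ) = 0
      linear_combination (-(μ*(γ:ℤ)))*he3 + (4*μ*(b₁:ℤ)*(b₂:ℤ))*he1 + (μ*(b₁:ℤ)*(b₂:ℤ))*he2
    · -- gcd 1
      show Int.gcd ((2:ℤ)^k) (↑(Int.gcd ((2:ℤ)^j * b₁) (-((2:ℤ)^(k-ℓ)*γ + b₁*b₂)))) = 1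
      set g := Int.gcd ((2:ℤ)^j * b₁) (-((2:ℤ)^(k-ℓ)*γ + b₁*b₂)) with hg
      have hdvd : (g:ℤ) ∣ (-((2:ℤ)^(k-ℓ)*γ + b₁*b₂)) := Int.gcd_dvd_right _ _
      have hgodd : g % 2 = 1 := by
        by_contra hco
        obtain ⟨c, hc⟩ := hdvd
        obtain ⟨m, hm⟩ : ∃ m, g = 2*m := ⟨g/2, by omega⟩
        rw [hm] at hc
        push_cast at hc
        rw [mul_assoc] at hc
        generalize (m:ℤ) * c = u at hc
        omega
      rw [int_gcd_nat]
      rw [show ((2:ℤ)^k).natAbs = 2^k by rw [Int.natAbs_pow]; rfl]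
      exact gcd_pow_two_odd hgodd
    · -- gcd 2
      show Int.gcd (μ * 2^ℓ) (↑(Int.gcd (μ * ((2:ℤ)^(ℓ-2-j) * b₂)) (μ * γ))) = 1
      set g := Int.gcd (μ * ((2:ℤ)^(ℓ-2-j) * b₂)) (μ * γ) with hg
      have hdvd : (g:ℤ) ∣ (μ * γ) := Int.gcd_dvd_right _ _
      have hgodd : g % 2 = 1 := by
        by_contra hco
        obtain ⟨c, hc⟩ := hdvd
        obtain ⟨m, hm⟩ : ∃ m, g = 2*m := ⟨g/2, by omega⟩
        rw [hm] at hc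
        push_cast at hc
        rw [mul_assoc] at hc
        generalize (m:ℤ) * c = u at hc
        rcases hμ with rfl | rfl <;> omega
      rw [int_gcd_nat]
      have : (μ * 2^ℓ).natAbs = 2^ℓ := by
        rcases hμ with rfl | rfl <;> simp [Int.natAbs_mul, Int.natAbs_pow]
      rw [this]
      exact gcd_pow_two_odd hgodd
    · -- C₁ ≡ -1 mod 4
      show (-((2:ℤ)^(k-ℓ)*γ + b₁*b₂)) ≡ -1 [ZMOD 4]
      rw [int_modeq_iff_zmod4]
      push_cast
      linear_combination (-1 : ZMod 4) * hlast
    · -- C₂ ≡ -1 mod 4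
      show (μ * γ : ℤ) ≡ -1 [ZMOD 4]
      rw [int_modeq_iff_zmod4]
      push_cast
      rw [hγ4]
      rcases hμ with rfl | rfl <;> norm_num
    · -- 0 ≤ B₁/A₁
      show 0 ≤ (((2:ℤ)^j * b₁ : ℤ) : ℚ) / (((2:ℤ)^k : ℤ) : ℚ)
      positivity
    · show (((2:ℤ)^j * b₁ : ℤ) : ℚ) / (((2:ℤ)^k : ℤ) : ℚ) < 1
      have hlt : ((2:ℤ)^j * b₁ : ℤ) < (2:ℤ)^k := by
        have h1 : (2^j * b₁ : ℕ) < 2^k := by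
          calc 2^j * b₁ < 2^j * 2^(k-j) := by
                exact (Nat.mul_lt_mul_left (Nat.two_pow_pos j)).2 hb1
          _ = 2^k := by rw [← pow_add]; congr 1; omega
        exact_mod_cast h1
      rw [div_lt_one (by positivity)]
      exact_mod_cast hlt
    · -- 0 ≤ B₂/A₂
      have hrw : ((μ * ((2:ℤ)^(ℓ-2-j) * b₂) : ℤ) : ℚ) / ((μ * 2^ℓ : ℤ) : ℚ)
          = (((2:ℤ)^(ℓ-2-j) * b₂ : ℤ) : ℚ) / (((2:ℤ)^ℓ : ℤ) : ℚ) := by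
        push_cast
        rw [mul_div_mul_left _ _ hμ0]
      show 0 ≤ ((μ * ((2:ℤ)^(ℓ-2-j) * b₂) : ℤ) : ℚ) / ((μ * 2^ℓ : ℤ) : ℚ)
      rw [hrw]; positivity
    · have hrw : ((μ * ((2:ℤ)^(ℓ-2-j) * b₂) : ℤ) : ℚ) / ((μ * 2^ℓ : ℤ) : ℚ)
          = (((2:ℤ)^(ℓ-2-j) * b₂ : ℤ) : ℚ) / (((2:ℤ)^ℓ : ℤ) : ℚ) := by
        push_cast
        rw [mul_div_mul_left _ _ hμ0]
      show ((μ * ((2:ℤ)^(ℓ-2-j) * b₂) : ℤ) : ℚ) / ((μ * 2^ℓ : ℤ) : ℚ) < 1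
      rw [hrw, div_lt_one (by positivity)]
      have h1 : (2^(ℓ-2-j) * b₂ : ℕ) < 2^ℓ := by
        calc 2^(ℓ-2-j) * b₂ < 2^(ℓ-2-j) * 2^(j+2) := by
              exact (Nat.mul_lt_mul_left (Nat.two_pow_pos _)).2 hb2
        _ = 2^ℓ := by rw [← pow_add]; congr 1; omega
      exact_mod_cast h1
    · -- 0 ≤ C₂/(4A₂)
      have hrw : ((μ * γ : ℤ) : ℚ) / (4 * ((μ * 2^ℓ : ℤ) : ℚ))
          = ((γ : ℚ)) / (((2:ℤ)^(ℓ+2) : ℤ) : ℚ) := by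
        push_cast
        rw [show (4:ℚ) * ((μ:ℚ) * 2^ℓ) = (μ:ℚ) * (4 * 2^ℓ) by ring,
          mul_div_mul_left _ _ hμ0]
        congr 1
        rw [pow_add]; ring
      show 0 ≤ ((μ * γ : ℤ) : ℚ) / (4 * ((μ * 2^ℓ : ℤ) : ℚ))
      rw [hrw]; positivity
    · have hrw : ((μ * γ : ℤ) : ℚ) / (4 * ((μ * 2^ℓ : ℤ) : ℚ))
          = ((γ : ℚ)) / (((2:ℤ)^(ℓ+2) : ℤ) : ℚ) := by
        push_cast
        rw [show (4:ℚ) * ((μ:ℚ) * 2^ℓ) = (μ:ℚ) * (4 * 2^ℓ) by ring,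
          mul_div_mul_left _ _ hμ0]
        congr 1
        rw [pow_add]; ring
      show ((μ * γ : ℤ) : ℚ) / (4 * ((μ * 2^ℓ : ℤ) : ℚ)) < 1
      rw [hrw, div_lt_one (by positivity)]
      exact_mod_cast hγl

lemma pmap_injOn (k ℓ : ℕ) (μ : ℤ) (hμ : μ = 1 ∨ μ = -1) :
    ∀ x ∈ Fdom k ℓ μ, ∀ y ∈ Fdom k ℓ μ, Pmap k ℓ μ x = Pmap k ℓ μ y → x = y := by
  have hμ0 : (μ:ℤ) ≠ 0 := by rcases hμ with rfl | rfl <;> norm_num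
  rintro ⟨j, b₁, b₂, γ⟩ hx ⟨j', b₁', b₂', γ'⟩ hy heq
  rw [mem_Fdom] at hx hy
  obtain ⟨-, hodd1, -, -, -, -, -⟩ := hx
  obtain ⟨-, hodd1', -, -, -, -, -⟩ := hy
  simp only [Pmap, Prod.mk.injEq] at heq hodd1 hodd1'
  obtain ⟨e1, e2, e3, e4⟩ := heq
  have h1n : (2^j * b₁ : ℕ) = 2^j' * b₁' := by exact_mod_cast e1
  obtain ⟨hj, hb1⟩ := two_adic_unique hodd1 hodd1' h1n
  subst hj
  have hγ : γ = γ' := by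
    have := mul_left_cancel₀ hμ0 e4
    exact_mod_cast this
  have hb2 : b₂ = b₂' := by
    have h := mul_left_cancel₀ hμ0 e3
    have h2 := mul_left_cancel₀ (a := (2:ℤ)^(ℓ-2-j)) (by positivity) h
    exact_mod_cast h2
  simp [hb1, hb2, hγ]

lemma kron_mu_gamma (μ : ℤ) (hμ : μ = 1 ∨ μ = -1) (γ : ℤ) :
    kron (μ * γ) 2 = kron γ 2 := by
  rcases hμ with rfl | rfl
  · rw [one_mul]
  · rw [show (-1) * γ = -γ by ring, kron_two_neg]

lemma ssplit_eval (k ℓ : ℕ) (hℓ2 : 2 ≤ ℓ) (hkℓ : ℓ < k) (μ : ℤ) (hμ : μ = 1 ∨ μ = -1)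
    (j b₁ b₂ γ : ℕ) (hj : j < ℓ-1) (hodd1 : b₁ % 2 = 1) (hodd2 : b₂ % 2 = 1)
    (hγ2 : γ % 2 = 1) :
    ssplit ((2:ℤ)^k) (μ*2^ℓ) (Pmap k ℓ μ (j,b₁,b₂,γ)) =
      (if ((b₁ : ZMod 4) = 1) then 1 else -μ) * (kron (b₁:ℤ) 2)^(k-ℓ) *
      (kron (-((2:ℤ)^(k-ℓ)*γ + (b₁:ℤ)*b₂)) 2)^j * (kron (γ:ℤ) 2)^(ℓ-j) := by
  have hμ0 : (μ:ℤ) ≠ 0 := by rcases hμ with rfl | rfl <;> norm_num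
  have hjℓ : j ≤ ℓ := by omega
  have hD : (Int.gcd ((2:ℤ)^k) (μ*2^ℓ) : ℤ) = 2^ℓ := by
    have hna : (μ*2^ℓ : ℤ).natAbs = 2^ℓ := by
      rcases hμ with rfl | rfl <;> simp [Int.natAbs_mul, Int.natAbs_pow]
    rw [Int.gcd, hna, show ((2:ℤ)^k).natAbs = 2^k by rw [Int.natAbs_pow]; rfl,
      Nat.gcd_comm, Nat.gcd_eq_left (pow_dvd_pow 2 hkℓ.le)]
    push_cast; ring
  have hD1 : (Int.gcd ((2:ℤ)^ℓ) ((2:ℤ)^j * b₁) : ℤ) = 2^j := by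
    have h1 : ((2:ℤ)^j * (b₁:ℕ)) = ((2^j * b₁ : ℕ) : ℤ) := by push_cast; ring
    rw [h1, Int.gcd, Int.natAbs_natCast, show ((2:ℤ)^ℓ).natAbs = 2^ℓ by rw [Int.natAbs_pow]; rfl]
    have h2 : 2^ℓ = 2^j * 2^(ℓ-j) := by rw [← pow_add]; congr 1; omega
    rw [h2, Nat.gcd_mul_left, gcd_pow_two_odd hodd1, mul_one]
    push_cast; ring
  have hBD1 : ((2:ℤ)^j * (b₁:ℕ)) / ((2:ℤ)^j) = (b₁:ℤ) :=
    Int.mul_ediv_cancel_left _ (by positivity)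
  have hA1D : ((2:ℤ)^k) / ((2:ℤ)^ℓ) = 2^(k-ℓ) := by
    rw [show (2:ℤ)^k = 2^ℓ * 2^(k-ℓ) by rw [← pow_add]; congr 1; omega]
    exact Int.mul_ediv_cancel_left _ (by positivity)
  have hA2D : (μ * (2:ℤ)^ℓ) / ((2:ℤ)^ℓ) = μ := by
    rw [mul_comm]
    exact Int.mul_ediv_cancel_left _ (by positivity)
  have hD2 : ((2:ℤ)^ℓ) / ((2:ℤ)^j) = 2^(ℓ-j) := by
    rw [show (2:ℤ)^ℓ = 2^j * 2^(ℓ-j) by rw [← pow_add]; congr 1; omega]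
    exact Int.mul_ediv_cancel_left _ (by positivity)
  have hsign : ((μ * (2:ℤ)^ℓ).sign * (μ * (2:ℤ)^ℓ)) / ((2:ℤ)^ℓ) = 1 := by
    have h2 : ((μ * (2:ℤ)^ℓ).sign * (μ * (2:ℤ)^ℓ)) = 2^ℓ := by
      rcases hμ with rfl | rfl
      · rw [one_mul, Int.sign_eq_one_of_pos (by positivity), one_mul]
      · rw [show (-1 : ℤ) * 2^ℓ = -(2^ℓ) by ring, Int.sign_neg,
          Int.sign_eq_one_of_pos (by positivity)]
        ring
    rw [h2]
    exact Int.ediv_self (by positivity)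
  have hC1odd : (-((2:ℤ)^(k-ℓ)*γ + b₁*b₂)) % 2 = 1 := by
    obtain ⟨s, hs⟩ : ∃ s:ℤ, (2:ℤ)^(k-ℓ) = 2*s := ⟨2^(k-ℓ-1), by rw [← pow_succ']; congr 1; omega⟩
    have hbbz : ((b₁:ℤ)*b₂) % 2 = 1 := by exact_mod_cast (by rw [Nat.mul_mod, hodd1, hodd2] : (b₁*b₂) % 2 = 1)
    rw [hs, mul_assoc]
    generalize s * (γ:ℤ) = u at *
    generalize (b₁:ℤ)*(b₂:ℤ) = w at hbbz ⊢
    omega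
  have hμγodd : (μ * (γ:ℤ)) % 2 = 1 := by
    rcases hμ with rfl | rfl
    · rw [one_mul]; omega
    · have : ((-1:ℤ)) * γ = -(γ:ℤ) := by ring
      rw [this]; omega
  simp only [ssplit, Pmap]
  rw [hD, hD1, hBD1, hA1D, hA2D, hD2, hsign, kron_one_right, mul_one]
  rw [kron_two_pow_left j _ hC1odd, kron_two_pow_left (ℓ-j) _ hμγodd, kron_mu_gamma μ hμ]
  have hE : kron (kron (-1) (b₁:ℤ)) (-(2^k * (μ * 2^ℓ))) =
      (if ((b₁ : ZMod 4) = 1) then 1 else -μ) := by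
    have hb1pos : (0:ℤ) < (b₁:ℤ) := by exact_mod_cast Nat.pos_of_ne_zero (by omega)
    have hb1odd : (b₁:ℤ) % 2 = 1 := by exact_mod_cast hodd1
    rw [kron_neg_one_left _ hb1odd hb1pos]
    have hcast : ((b₁:ℤ) : ZMod 4) = ((b₁:ℕ) : ZMod 4) := by push_cast; ring
    by_cases hb4 : ((b₁:ℕ) : ZMod 4) = 1
    · rw [if_pos hb4, show ZMod.χ₄ ((b₁:ℤ) : ZMod 4) = 1 by rw [hcast, hb4]; rfl, kron_one_left]
    · have h3 : ((b₁:ℕ) : ZMod 4) = 3 := by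
        have hm : ((b₁ % 4 : ℕ) : ZMod 4) = ((b₁ : ℕ) : ZMod 4) := ZMod.natCast_mod b₁ 4
        have hb14 : b₁ % 4 = 1 ∨ b₁ % 4 = 3 := by omega
        rcases hb14 with h | h
        · exfalso; apply hb4; rw [← hm, h]; rfl
        · rw [← hm, h]; rfl
      rw [if_neg hb4, show ZMod.χ₄ ((b₁:ℤ) : ZMod 4) = -1 by rw [hcast, h3]; rfl]
      exact kron_neg_one_big k ℓ μ hμ
  rw [hE]
  have hk1 : kron ((2:ℤ)^(k-ℓ)) μ = 1 := by
    rcases hμ with rfl | rfl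
    · exact kron_one_right _
    · exact kron_neg_one_right _ (by positivity)
  have hb1odd : (b₁:ℤ) % 2 = 1 := by exact_mod_cast hodd1
  rw [hk1, mul_one, kron_two_pow_right]

lemma tsum_plset {S : Set (ℤ×ℤ×ℤ×ℤ)} (G : Finset (ℤ×ℤ×ℤ×ℤ)) (h : S = ↑G)
    (g : ℤ×ℤ×ℤ×ℤ → ℂ) : ∑' (v : ↥S), g v.val = ∑ v ∈ G, g v := by
  subst h
  exact Finset.tsum_subtype' G g

lemma coprime_pow_two_iff (x t : ℕ) (ht : 1 ≤ t) : Nat.gcd x (2^t) = 1 ↔ x % 2 = 1 := by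
  change Nat.Coprime x (2^t) ↔ _
  rw [Nat.coprime_pow_right_iff ht]
  unfold Nat.Coprime
  constructor
  · intro h
    rcases Nat.mod_two_eq_zero_or_one x with h2 | h2
    · exfalso
      have : 2 ∣ x := Nat.dvd_of_mod_eq_zero h2
      have : 2 ∣ Nat.gcd x 2 := Nat.dvd_gcd this dvd_rfl
      omega
    · exact h2
  · intro h
    have : ¬ 2 ∣ x := by omega
    exact (Nat.coprime_comm.1 ((Nat.prime_two.coprime_iff_not_dvd).2 this))

lemma gamma_sum (p n : ℕ) (c : ZMod 4) (hc : c = 1 ∨ c = 3) :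
    ∑ γ ∈ Finset.range (8*n), (if ((γ:ℕ) : ZMod 4) = c then ((kron (γ:ℤ) 2 : ℤ) : ℂ)^p else 0)
      = if p % 2 = 0 then ((2*n : ℕ) : ℂ) else 0 := by
  have k1 : kron (1:ℤ) 2 = 1 := by rw [kron_two]; norm_num
  have k3 : kron (3:ℤ) 2 = -1 := by rw [kron_two]; norm_num
  have k5 : kron (5:ℤ) 2 = -1 := by rw [kron_two]; norm_num
  have k7 : kron (7:ℤ) 2 = 1 := by rw [kron_two]; norm_num
  induction n with
  | zero => simp
  | succ n ih =>
    have hc4 : ∀ r : ℕ, ((8*n+r : ℕ) : ZMod 4) = ((r:ℕ) : ZMod 4) := by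
      intro r
      push_cast
      rw [show ((8:ZMod 4)) = 0 from rfl]
      ring
    have hkr : ∀ r : ℕ, kron ((8*n+r : ℕ) : ℤ) 2 = kron (r:ℤ) 2 := by
      intro r
      rw [kron_two_emod]
      push_cast
      rw [show (8*(n:ℤ)+r) = (r:ℤ) + (n:ℤ)*8 by ring, Int.add_mul_emod_self_right,
        ← kron_two_emod]
    rw [show 8*(n+1) = 8*n+6+1+1 by ring, Finset.sum_range_succ,
      show 8*n+6+1 = 8*n+5+1+1 by ring, Finset.sum_range_succ,
      show 8*n+5+1 = 8*n+4+1+1 by ring, Finset.sum_range_succ,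
      show 8*n+4+1 = 8*n+3+1+1 by ring, Finset.sum_range_succ,
      show 8*n+3+1 = 8*n+2+1+1 by ring, Finset.sum_range_succ,
      show 8*n+2+1 = 8*n+1+1+1 by ring, Finset.sum_range_succ,
      show 8*n+1+1 = 8*n+1+1 by ring, Finset.sum_range_succ,
      Finset.sum_range_succ, ih]
    rw [show 8*n+1+1 = 8*n+2 by ring, show 8*n+2+1 = 8*n+3 by ring,
      show 8*n+3+1 = 8*n+4 by ring, show 8*n+4+1 = 8*n+5 by ring,
      show 8*n+5+1 = 8*n+6 by ring, show 8*n+6+1 = 8*n+7 by ring]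
    rw [show (8*n : ℕ) = 8*n+0 by ring] 
    rw [hc4 0, hc4 1, hc4 2, hc4 3, hc4 4, hc4 5, hc4 6, hc4 7,
      hkr 0, hkr 1, hkr 2, hkr 3, hkr 4, hkr 5, hkr 6, hkr 7]
    push_cast
    rcases hc with rfl | rfl
    · rw [if_neg (by decide : ¬((0:ZMod 4) = 1)), if_pos (by decide : ((1:ZMod 4) = 1)),
        if_neg (by decide : ¬((2:ZMod 4) = 1)), if_neg (by decide : ¬((3:ZMod 4) = 1)),
        if_neg (by decide : ¬((4:ZMod 4) = 1)), if_pos (by decide : ((5:ZMod 4) = 1)),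
        if_neg (by decide : ¬((6:ZMod 4) = 1)), if_neg (by decide : ¬((7:ZMod 4) = 1)),
        k1, k5]
      rcases Nat.even_or_odd p with hp | hp
      · rw [if_pos (Nat.even_iff.1 hp), if_pos (Nat.even_iff.1 hp)]
        push_cast [hp.neg_one_pow]
        ring
      · rw [if_neg (by have := Nat.odd_iff.1 hp; omega : ¬ p % 2 = 0), if_neg (by have := Nat.odd_iff.1 hp; omega : ¬ p % 2 = 0)]
        push_cast [hp.neg_one_pow]
        ring
    · rw [if_neg (by decide : ¬((0:ZMod 4) = 3)), if_neg (by decide : ¬((1:ZMod 4) = 3)),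
        if_neg (by decide : ¬((2:ZMod 4) = 3)), if_pos (by decide : ((3:ZMod 4) = 3)),
        if_neg (by decide : ¬((4:ZMod 4) = 3)), if_neg (by decide : ¬((5:ZMod 4) = 3)),
        if_neg (by decide : ¬((6:ZMod 4) = 3)), if_pos (by decide : ((7:ZMod 4) = 3)),
        k3, k7]
      rcases Nat.even_or_odd p with hp | hp
      · rw [if_pos (Nat.even_iff.1 hp), if_pos (Nat.even_iff.1 hp)]
        push_cast [hp.neg_one_pow]
        ring
      · rw [if_neg (by have := Nat.odd_iff.1 hp; omega : ¬ p % 2 = 0), if_neg (by have := Nat.odd_iff.1 hp; omega : ¬ p % 2 = 0)]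
        push_cast [hp.neg_one_pow]
        ring

lemma sum_range_truncate {M : Type*} [AddCommMonoid M] (N K : ℕ) (h : K ≤ N)
    (P : ℕ → Prop) [DecidablePred P] (f : ℕ → M) :
    ∑ x ∈ Finset.range N, (if (x < K ∧ P x) then f x else 0)
      = ∑ x ∈ Finset.range K, (if P x then f x else 0) := by
  rw [← Finset.sum_subset (Finset.range_subset_range.2 h)
    (fun x hx hnx => by
      rw [if_neg]
      rintro ⟨h1, -⟩
      exact hnx (Finset.mem_range.2 h1))]
  apply Finset.sum_congr rfl
  intro x hx
  have : x < K := Finset.mem_range.1 hx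
  by_cases hP : P x
  · rw [if_pos ⟨this, hP⟩, if_pos hP]
  · rw [if_neg (by tauto), if_neg hP]

noncomputable def Wb (k ℓ j : ℕ) (μ σ m₁ m₂ : ℤ) (b₁ b₂ : ℕ) : ℂ :=
  (((if ((b₁ : ZMod 4) = 1) then (1:ℤ) else -μ) : ℤ) : ℂ) * (σ:ℂ)^j *
  ((kron (b₁:ℤ) 2 : ℤ) : ℂ)^(k-ℓ+j) * ((kron (b₂:ℤ) 2 : ℤ) : ℂ)^j *
  (e2pi ((m₁:ℚ) * (b₁:ℚ) / (2:ℚ)^(k-j)) * e2pi ((m₂:ℚ) * (b₂:ℚ) / (2:ℚ)^(j+2)))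

def Condb (k ℓ j : ℕ) (η₂ : ℤ) (b₁ b₂ : ℕ) : Prop :=
  b₁ % 2 = 1 ∧ b₁ < 2^(k-j) ∧ b₂ % 2 = 1 ∧ b₂ < 2^(j+2) ∧
    ((b₁ : ZMod 4) * (b₂ : ZMod 4) = ((η₂:ℤ) : ZMod 4))

instance (k ℓ j : ℕ) (η₂ : ℤ) : DecidablePred (fun p : ℕ × ℕ => Condb k ℓ j η₂ p.1 p.2) :=
  fun _ => by unfold Condb; infer_instance

instance (k ℓ j : ℕ) (η₂ : ℤ) (b₁ b₂ : ℕ) : Decidable (Condb k ℓ j η₂ b₁ b₂) := by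
  unfold Condb; infer_instance

lemma e2pi_add (r s : ℚ) : e2pi (r + s) = e2pi r * e2pi s := by
  rw [e2pi, e2pi, e2pi, ← Complex.exp_add]
  congr 1
  push_cast
  ring

lemma e2pi_arg_eq (k ℓ j : ℕ) (hkℓ : ℓ < k) (hℓ2 : 2 ≤ ℓ) (hj : j < ℓ-1)
    (μ : ℤ) (hμ : μ = 1 ∨ μ = -1) (m₁ m₂ : ℤ) (b₁ b₂ : ℕ) :
    e2pi ((m₁:ℚ) * ((((2:ℤ)^j * (b₁:ℕ) : ℤ) : ℚ) / (((2:ℤ)^k : ℤ) : ℚ)) +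
      (m₂:ℚ) * (((μ * ((2:ℤ)^(ℓ-2-j) * (b₂:ℕ)) : ℤ) : ℚ) / ((μ * 2^ℓ : ℤ) : ℚ)))
    = e2pi ((m₁:ℚ) * (b₁:ℚ) / (2:ℚ)^(k-j)) * e2pi ((m₂:ℚ) * (b₂:ℚ) / (2:ℚ)^(j+2)) := by
  have hμ0 : (μ:ℚ) ≠ 0 := by rcases hμ with rfl | rfl <;> norm_num
  have hq1 : (((2:ℤ)^j * (b₁:ℕ) : ℤ) : ℚ) / (((2:ℤ)^k : ℤ) : ℚ) = (b₁:ℚ)/(2:ℚ)^(k-j) := by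
    push_cast
    rw [show (2:ℚ)^k = 2^j * 2^(k-j) by rw [← pow_add]; congr 1; omega]
    rw [mul_div_mul_left _ _ (by positivity : (2:ℚ)^j ≠ 0)]
  have hq2 : (((μ * ((2:ℤ)^(ℓ-2-j) * (b₂:ℕ)) : ℤ) : ℚ)) / ((μ * 2^ℓ : ℤ) : ℚ)
      = (b₂:ℚ)/(2:ℚ)^(j+2) := by
    push_cast
    rw [mul_div_mul_left _ _ hμ0]
    rw [show (2:ℚ)^ℓ = 2^(ℓ-2-j) * 2^(j+2) by rw [← pow_add]; congr 1; omega]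
    rw [mul_div_mul_left _ _ (by positivity : (2:ℚ)^(ℓ-2-j) ≠ 0)]
  rw [hq1, hq2, ← e2pi_add, mul_div_assoc, mul_div_assoc]

lemma pointwise (k ℓ : ℕ) (hℓ2 : 2 ≤ ℓ) (hkℓ : ℓ < k) (μ σ η₂ m₁ m₂ : ℤ)
    (hμ : μ = 1 ∨ μ = -1)
    (hC : ∀ cI : ℤ, cI % 2 = 1 → ((cI : ZMod 4) = ((η₂:ℤ) : ZMod 4)) →
        ∀ γ : ℕ, ((γ:ZMod 4) = -(μ:ZMod 4)) →
        kron (-((2:ℤ)^(k-ℓ)*γ + cI)) 2 = σ * kron cI 2)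
    (hδ : ∀ cI : ℤ, cI % 2 = 1 → ∀ γ : ℕ, ((γ:ZMod 4) = -(μ:ZMod 4)) →
        (((cI : ZMod 4) + 2^(k-ℓ) * ((γ:ℕ) : ZMod 4) = 1) ↔ ((cI : ZMod 4) = ((η₂:ℤ) : ZMod 4))))
    (j b₁ b₂ γ : ℕ) (hj : j < ℓ-1) :
    (if Fpred k ℓ μ (j,b₁,b₂,γ)
      then ((ssplit ((2:ℤ)^k) (μ*2^ℓ) (Pmap k ℓ μ (j,b₁,b₂,γ)) : ℤ) : ℂ) *
        e2pi ((m₁:ℚ) * (((Pmap k ℓ μ (j,b₁,b₂,γ)).1 : ℚ) / (((2:ℤ)^k : ℤ) : ℚ)) +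
              (m₂:ℚ) * (((Pmap k ℓ μ (j,b₁,b₂,γ)).2.2.1 : ℚ) / ((μ*2^ℓ : ℤ) : ℚ)))
      else 0)
    = (if Condb k ℓ j η₂ b₁ b₂ then Wb k ℓ j μ σ m₁ m₂ b₁ b₂ else 0) *
      (if ((γ:ZMod 4) = -(μ:ZMod 4)) then ((kron (γ:ℤ) 2 : ℤ) : ℂ)^(ℓ-j) else 0) := by
  by_cases hγ : ((γ:ℕ) : ZMod 4) = -(μ:ZMod 4)
  swap
  · rw [if_neg hγ, mul_zero, if_neg]
    intro hF
    exact hγ hF.2.2.2.2.1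
  rw [if_pos hγ]
  have hbbcast : (((b₁:ℤ) * (b₂:ℤ) : ℤ) : ZMod 4) = (b₁ : ZMod 4) * (b₂ : ZMod 4) := by
    push_cast; ring
  by_cases hcb : Condb k ℓ j η₂ b₁ b₂
  · obtain ⟨hodd1, hlt1, hodd2, hlt2, hclass⟩ := hcb
    have hbbodd : ((b₁:ℤ)*(b₂:ℤ)) % 2 = 1 := by
      exact_mod_cast (by rw [Nat.mul_mod, hodd1, hodd2] : (b₁*b₂) % 2 = 1)
    have hF : Fpred k ℓ μ (j,b₁,b₂,γ) := by
      refine ⟨hodd1, hlt1, hodd2, hlt2, hγ, ?_⟩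
      have := (hδ ((b₁:ℤ)*(b₂:ℤ)) hbbodd γ hγ).2 (by rw [hbbcast]; exact hclass)
      rw [hbbcast] at this
      exact this
    rw [if_pos hF, if_pos ⟨hodd1, hlt1, hodd2, hlt2, hclass⟩]
    have hγodd : γ % 2 = 1 := by
      have := gamma_mod μ hμ γ hγ
      rcases hμ with rfl | rfl <;> simp at this <;> omega
    rw [ssplit_eval k ℓ hℓ2 hkℓ μ hμ j b₁ b₂ γ hj hodd1 hodd2 hγodd]
    have harg : e2pi ((m₁:ℚ) * (((Pmap k ℓ μ (j,b₁,b₂,γ)).1 : ℚ) / (((2:ℤ)^k : ℤ) : ℚ)) +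
              (m₂:ℚ) * (((Pmap k ℓ μ (j,b₁,b₂,γ)).2.2.1 : ℚ) / ((μ*2^ℓ : ℤ) : ℚ)))
        = e2pi ((m₁:ℚ) * (b₁:ℚ) / (2:ℚ)^(k-j)) * e2pi ((m₂:ℚ) * (b₂:ℚ) / (2:ℚ)^(j+2)) := by
      exact e2pi_arg_eq k ℓ j hkℓ hℓ2 hj μ hμ m₁ m₂ b₁ b₂
    rw [harg]
    rw [hC ((b₁:ℤ)*(b₂:ℤ)) hbbodd (by rw [hbbcast]; exact hclass) γ hγ, kron_two_mul]
    rw [Wb]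
    push_cast
    ring
  · rw [if_neg hcb, zero_mul, if_neg]
    rintro ⟨hodd1, hlt1, hodd2, hlt2, -, hlast⟩
    apply hcb
    have hbbodd : ((b₁:ℤ)*(b₂:ℤ)) % 2 = 1 := by
      exact_mod_cast (by rw [Nat.mul_mod, hodd1, hodd2] : (b₁*b₂) % 2 = 1)
    refine ⟨hodd1, hlt1, hodd2, hlt2, ?_⟩
    have := (hδ ((b₁:ℤ)*(b₂:ℤ)) hbbodd γ hγ).1 (by rw [hbbcast]; exact hlast)
    rw [hbbcast] at this
    exact this

lemma pm_pow_parityC (x : ℂ) (h : x = 1 ∨ x = -1) (a b : ℕ) (hab : a % 2 = b % 2) :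
    x ^ a = x ^ b := by
  rcases h with rfl | rfl
  · simp
  · rcases Nat.even_or_odd a with ha | ha
    · rw [ha.neg_one_pow, (Nat.even_iff.2 (by rw [← hab]; exact Nat.even_iff.1 ha)).neg_one_pow]
    · rw [ha.neg_one_pow, (Nat.odd_iff.2 (by rw [← hab]; exact Nat.odd_iff.1 ha)).neg_one_pow]

lemma nat_cast_zmod4_cases (b : ℕ) (hb : b % 2 = 1) :
    ((b : ZMod 4) = 1 ∧ (b : ZMod 4) ≠ 3) ∨ ((b : ZMod 4) = 3 ∧ (b : ZMod 4) ≠ 1) := by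
  have hm : ((b % 4 : ℕ) : ZMod 4) = ((b : ℕ) : ZMod 4) := ZMod.natCast_mod b 4
  have h4 : b % 4 = 1 ∨ b % 4 = 3 := by omega
  rcases h4 with h | h
  · left
    rw [← hm, h]
    exact ⟨rfl, by decide⟩
  · right
    rw [← hm, h]
    exact ⟨rfl, by decide⟩

lemma bsum (k ℓ j : ℕ) (hℓ2 : 2 ≤ ℓ) (hkℓ : ℓ < k) (hj : j < ℓ-1) (hpar : j % 2 = ℓ % 2)
    (μ σ η₂ m₁ m₂ : ℤ) (hμ : μ = 1 ∨ μ = -1) (hσ : σ = 1 ∨ σ = -1) (hη : η₂ = 1 ∨ η₂ = -1) :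
    ∑ b₁ ∈ Finset.range (2^k), ∑ b₂ ∈ Finset.range (2^ℓ),
      (if Condb k ℓ j η₂ b₁ b₂ then Wb k ℓ j μ σ m₁ m₂ b₁ b₂ else 0)
    = (σ:ℂ)^ℓ * (gaussGEta 1 k m₁ (k-j) * gaussGEta η₂ ℓ m₂ (j+2) +
        (-(μ:ℂ)) * gaussGEta (-1) k m₁ (k-j) * gaussGEta (-η₂) ℓ m₂ (j+2)) := by
  classical
  set F1 : ℕ → ℂ := fun b₁ => if (b₁ < 2^(k-j) ∧ (b₁ % 2 = 1 ∧ ((b₁:ZMod 4) = ((1:ℤ):ZMod 4))))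
    then ((kron (b₁:ℤ) 2 : ℤ):ℂ)^k * e2pi ((m₁:ℚ)*(b₁:ℚ)/(2:ℚ)^(k-j)) else 0 with hF1
  set F3 : ℕ → ℂ := fun b₁ => if (b₁ < 2^(k-j) ∧ (b₁ % 2 = 1 ∧ ((b₁:ZMod 4) = ((-1:ℤ):ZMod 4))))
    then ((kron (b₁:ℤ) 2 : ℤ):ℂ)^k * e2pi ((m₁:ℚ)*(b₁:ℚ)/(2:ℚ)^(k-j)) else 0 with hF3
  set G1 : ℕ → ℂ := fun b₂ => if (b₂ < 2^(j+2) ∧ (b₂ % 2 = 1 ∧ ((b₂:ZMod 4) = ((η₂:ℤ):ZMod 4))))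
    then ((kron (b₂:ℤ) 2 : ℤ):ℂ)^ℓ * e2pi ((m₂:ℚ)*(b₂:ℚ)/(2:ℚ)^(j+2)) else 0 with hG1
  set G3 : ℕ → ℂ := fun b₂ => if (b₂ < 2^(j+2) ∧ (b₂ % 2 = 1 ∧ ((b₂:ZMod 4) = ((-η₂:ℤ):ZMod 4))))
    then ((kron (b₂:ℤ) 2 : ℤ):ℂ)^ℓ * e2pi ((m₂:ℚ)*(b₂:ℚ)/(2:ℚ)^(j+2)) else 0 with hG3
  have hpt : ∀ b₁ b₂ : ℕ, (if Condb k ℓ j η₂ b₁ b₂ then Wb k ℓ j μ σ m₁ m₂ b₁ b₂ else 0)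
      = (σ:ℂ)^ℓ * (F1 b₁ * G1 b₂ + (-(μ:ℂ)) * F3 b₁ * G3 b₂) := by
    intro b₁ b₂
    by_cases h1 : b₁ % 2 = 1
    swap
    · rw [if_neg (fun hc => h1 hc.1), hF1, hF3]
      simp only [if_neg (fun hc : _ ∧ _ ∧ _ => h1 hc.2.1)]
      ring
    by_cases hl1 : b₁ < 2^(k-j)
    swap
    · rw [if_neg (fun hc => hl1 hc.2.1), hF1, hF3]
      simp only [if_neg (fun hc : _ ∧ _ ∧ _ => hl1 hc.1)]
      ring
    by_cases h2 : b₂ % 2 = 1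
    swap
    · rw [if_neg (fun hc => h2 hc.2.2.1), hG1, hG3]
      simp only [if_neg (fun hc : _ ∧ _ ∧ _ => h2 hc.2.1)]
      ring
    by_cases hl2 : b₂ < 2^(j+2)
    swap
    · rw [if_neg (fun hc => hl2 hc.2.2.2.1), hG1, hG3]
      simp only [if_neg (fun hc : _ ∧ _ ∧ _ => hl2 hc.1)]
      ring
    have hone : ((1:ℤ) : ZMod 4) = 1 := by decide
    have hmone : ((-1:ℤ) : ZMod 4) = 3 := by decide
    have hkb1 : ((kron (b₁:ℤ) 2 : ℤ):ℂ) = 1 ∨ ((kron (b₁:ℤ) 2 : ℤ):ℂ) = -1 := by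
      rcases kron_two_pm (b₁:ℤ) (by exact_mod_cast h1) with h | h <;> rw [h] <;> simp
    have hkb2 : ((kron (b₂:ℤ) 2 : ℤ):ℂ) = 1 ∨ ((kron (b₂:ℤ) 2 : ℤ):ℂ) = -1 := by
      rcases kron_two_pm (b₂:ℤ) (by exact_mod_cast h2) with h | h <;> rw [h] <;> simp
    have hσC : ((σ:ℂ)) = 1 ∨ ((σ:ℂ)) = -1 := by
      rcases hσ with rfl | rfl <;> simp
    have hpow1 : ((kron (b₁:ℤ) 2 : ℤ):ℂ)^(k-ℓ+j) = ((kron (b₁:ℤ) 2 : ℤ):ℂ)^k :=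
      pm_pow_parityC _ hkb1 _ _ (by omega)
    have hpow2 : ((kron (b₂:ℤ) 2 : ℤ):ℂ)^j = ((kron (b₂:ℤ) 2 : ℤ):ℂ)^ℓ :=
      pm_pow_parityC _ hkb2 _ _ (by omega)
    have hpowσ : ((σ:ℂ))^j = ((σ:ℂ))^ℓ := pm_pow_parityC _ hσC _ _ (by omega)
    rcases nat_cast_zmod4_cases b₁ h1 with ⟨hb1c, hb1n⟩ | ⟨hb1c, hb1n⟩
    · -- b₁ ≡ 1
      have hF3z : F3 b₁ = 0 := by
        rw [hF3]
        simp only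
        rw [if_neg]
        rintro ⟨-, -, hcc⟩
        rw [hmone] at hcc
        exact hb1n hcc
      by_cases hcl : (b₂ : ZMod 4) = ((η₂:ℤ):ZMod 4)
      · have hcondb : Condb k ℓ j η₂ b₁ b₂ := by
          refine ⟨h1, hl1, h2, hl2, ?_⟩
          rw [hb1c, one_mul, hcl]
        rw [if_pos hcondb, Wb]
        rw [if_pos (by rw [hb1c])]
        rw [hF1, hG1]
        simp only
        rw [if_pos ⟨hl1, h1, by rw [hb1c, hone]⟩, if_pos ⟨hl2, h2, hcl⟩]
        rw [hF3z]
        rw [hpow1, hpow2, hpowσ]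
        push_cast
        ring
      · have hncondb : ¬ Condb k ℓ j η₂ b₁ b₂ := by
          rintro ⟨-, -, -, -, hcc⟩
          rw [hb1c, one_mul] at hcc
          exact hcl hcc
        rw [if_neg hncondb, hF3z]
        have hG1z : G1 b₂ = 0 := by
          rw [hG1]; simp only
          rw [if_neg]
          rintro ⟨-, -, hcc⟩
          exact hcl hcc
        rw [hG1z]
        ring
    · -- b₁ ≡ 3
      have hF1z : F1 b₁ = 0 := by
        rw [hF1]; simp only
        rw [if_neg]
        rintro ⟨-, -, hcc⟩
        rw [hone] at hcc
        exact hb1n hcc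
      have h3neg : (3 : ZMod 4) = -1 := by decide
      by_cases hcl : (b₂ : ZMod 4) = ((-η₂:ℤ):ZMod 4)
      · have hcondb : Condb k ℓ j η₂ b₁ b₂ := by
          refine ⟨h1, hl1, h2, hl2, ?_⟩
          rw [hb1c, hcl, h3neg]
          push_cast
          ring
        rw [if_pos hcondb, Wb]
        rw [if_neg (by rw [hb1c]; decide)]
        rw [hF3, hG3]
        simp only
        rw [if_pos ⟨hl1, h1, by rw [hb1c, hmone]⟩, if_pos ⟨hl2, h2, hcl⟩]
        rw [hF1z]
        rw [hpow1, hpow2, hpowσ]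
        push_cast
        ring
      · have hncondb : ¬ Condb k ℓ j η₂ b₁ b₂ := by
          rintro ⟨-, -, -, -, hcc⟩
          apply hcl
          rw [hb1c, h3neg] at hcc
          push_cast
          rw [← hcc]
          ring
        rw [if_neg hncondb, hF1z]
        have hG3z : G3 b₂ = 0 := by
          rw [hG3]; simp only
          rw [if_neg]
          rintro ⟨-, -, hcc⟩
          exact hcl hcc
        rw [hG3z]
        ring
  -- sum both sides
  have hsum : ∑ b₁ ∈ Finset.range (2^k), ∑ b₂ ∈ Finset.range (2^ℓ),
      (if Condb k ℓ j η₂ b₁ b₂ then Wb k ℓ j μ σ m₁ m₂ b₁ b₂ else 0)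
      = (σ:ℂ)^ℓ * ((∑ b₁ ∈ Finset.range (2^k), F1 b₁) * (∑ b₂ ∈ Finset.range (2^ℓ), G1 b₂) +
          (-(μ:ℂ)) * (∑ b₁ ∈ Finset.range (2^k), F3 b₁) * (∑ b₂ ∈ Finset.range (2^ℓ), G3 b₂)) := by
    simp only [hpt]
    rw [eq_comm, mul_add]
    simp only [Finset.sum_mul, Finset.mul_sum]
    simp only [← Finset.sum_add_distrib]
    rw [Finset.sum_comm]
    apply Finset.sum_congr rfl
    intro b₁ _
    apply Finset.sum_congr rfl
    intro b₂ _
    ring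
  rw [hsum]
  have hkj3 : 3 ≤ k - j := by omega
  have hFgauss : ∀ (η : ℤ), (∑ b₁ ∈ Finset.range (2^k),
      (if (b₁ < 2^(k-j) ∧ (b₁ % 2 = 1 ∧ ((b₁:ZMod 4) = ((η:ℤ):ZMod 4))))
        then ((kron (b₁:ℤ) 2 : ℤ):ℂ)^k * e2pi ((m₁:ℚ)*(b₁:ℚ)/(2:ℚ)^(k-j)) else 0))
      = gaussGEta η k m₁ (k-j) := by
    intro η
    rw [sum_range_truncate (2^k) (2^(k-j)) (pow_le_pow_right₀ (by norm_num) (by omega)) _ _]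
    rw [gaussGEta, Finset.sum_filter]
    rw [show max (k-j) 2 = k-j by omega]
    apply Finset.sum_congr rfl
    intro x _
    have hiff : (x % 2 = 1 ∧ ((x:ZMod 4) = ((η:ℤ):ZMod 4)))
        ↔ (Nat.gcd x (2^(k-j)) = 1 ∧ ((x:ZMod 4) = ((η:ℤ):ZMod 4))) :=
      and_congr_left' (coprime_pow_two_iff x (k-j) (by omega)).symm
    have hval : ((kron (x:ℤ) 2 : ℤ):ℂ)^k * e2pi ((m₁:ℚ)*(x:ℚ)/(2:ℚ)^(k-j))
        = ((kron (x:ℤ) 2 ^ k : ℤ) : ℂ) * e2pi ((m₁:ℚ)*(x:ℚ)/(2:ℚ)^(k-j)) := by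
      push_cast
      ring
    rw [hval]
    exact if_congr hiff rfl rfl
  have hGgauss : ∀ (η : ℤ), (∑ b₂ ∈ Finset.range (2^ℓ),
      (if (b₂ < 2^(j+2) ∧ (b₂ % 2 = 1 ∧ ((b₂:ZMod 4) = ((η:ℤ):ZMod 4))))
        then ((kron (b₂:ℤ) 2 : ℤ):ℂ)^ℓ * e2pi ((m₂:ℚ)*(b₂:ℚ)/(2:ℚ)^(j+2)) else 0))
      = gaussGEta η ℓ m₂ (j+2) := by
    intro η
    rw [sum_range_truncate (2^ℓ) (2^(j+2)) (pow_le_pow_right₀ (by norm_num) (by omega)) _ _]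
    rw [gaussGEta, Finset.sum_filter]
    rw [show max (j+2) 2 = j+2 by omega]
    apply Finset.sum_congr rfl
    intro x _
    have hiff : (x % 2 = 1 ∧ ((x:ZMod 4) = ((η:ℤ):ZMod 4)))
        ↔ (Nat.gcd x (2^(j+2)) = 1 ∧ ((x:ZMod 4) = ((η:ℤ):ZMod 4))) :=
      and_congr_left' (coprime_pow_two_iff x (j+2) (by omega)).symm
    have hval : ((kron (x:ℤ) 2 : ℤ):ℂ)^ℓ * e2pi ((m₂:ℚ)*(x:ℚ)/(2:ℚ)^(j+2))
        = ((kron (x:ℤ) 2 ^ ℓ : ℤ) : ℂ) * e2pi ((m₂:ℚ)*(x:ℚ)/(2:ℚ)^(j+2)) := by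
      push_cast
      ring
    rw [hval]
    exact if_congr hiff rfl rfl
  rw [hF1, hF3, hG1, hG3]
  rw [hFgauss 1, hFgauss (-1), hGgauss η₂, hGgauss (-η₂)]

lemma master (k ℓ : ℕ) (hℓ2 : 2 ≤ ℓ) (hkℓ : ℓ < k) (μ : ℤ) (hμ : μ = 1 ∨ μ = -1)
    (m₁ m₂ σ η₂ : ℤ) (hσ : σ = 1 ∨ σ = -1) (hη : η₂ = 1 ∨ η₂ = -1)
    (hC : ∀ cI : ℤ, cI % 2 = 1 → ((cI : ZMod 4) = ((η₂:ℤ) : ZMod 4)) →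
        ∀ γ : ℕ, ((γ:ZMod 4) = -(μ:ZMod 4)) →
        kron (-((2:ℤ)^(k-ℓ)*γ + cI)) 2 = σ * kron cI 2)
    (hδ : ∀ cI : ℤ, cI % 2 = 1 → ∀ γ : ℕ, ((γ:ZMod 4) = -(μ:ZMod 4)) →
        (((cI : ZMod 4) + 2^(k-ℓ) * ((γ:ℕ) : ZMod 4) = 1) ↔ ((cI : ZMod 4) = ((η₂:ℤ) : ZMod 4)))) :
    SigmaExp ((2:ℤ)^k) (μ * 2^ℓ) m₁ m₂ =
      (σ:ℂ)^ℓ * 2^ℓ * ∑ i ∈ Finset.filter (fun i => i % 2 = ℓ % 2) (Finset.range (ℓ-1)),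
        (gaussGEta 1 k m₁ (k-i) * gaussGEta η₂ ℓ m₂ (i+2) +
          (-(μ:ℂ)) * gaussGEta (-1) k m₁ (k-i) * gaussGEta (-η₂) ℓ m₂ (i+2)) := by
  classical
  have h0 : SigmaExp ((2:ℤ)^k) (μ * 2^ℓ) m₁ m₂
      = ∑ v ∈ (Fdom k ℓ μ).image (Pmap k ℓ μ),
          ((ssplit ((2:ℤ)^k) (μ*2^ℓ) v : ℤ) : ℂ) *
            e2pi ((m₁:ℚ) * ((v.1 : ℚ) / (((2:ℤ)^k : ℤ) : ℚ)) +
              (m₂:ℚ) * ((v.2.2.1 : ℚ) / ((μ*2^ℓ : ℤ) : ℚ))) := by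
    unfold SigmaExp
    exact tsum_plset _ (plset_eq k ℓ hℓ2 hkℓ μ hμ)
      (fun v => ((ssplit ((2:ℤ)^k) (μ*2^ℓ) v : ℤ) : ℂ) *
        e2pi ((m₁:ℚ) * ((v.1 : ℚ) / (((2:ℤ)^k : ℤ) : ℚ)) +
          (m₂:ℚ) * ((v.2.2.1 : ℚ) / ((μ*2^ℓ : ℤ) : ℚ))))
  rw [h0, Finset.sum_image (pmap_injOn k ℓ μ hμ), Fdom, Finset.sum_filter]
  simp only [Finset.sum_product]
  have hstep : ∀ j ∈ Finset.range (ℓ-1),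
      (∑ b₁ ∈ Finset.range (2^k), ∑ b₂ ∈ Finset.range (2^ℓ), ∑ γ ∈ Finset.range (2^(ℓ+2)),
        (if Fpred k ℓ μ (j,b₁,b₂,γ)
          then ((ssplit ((2:ℤ)^k) (μ*2^ℓ) (Pmap k ℓ μ (j,b₁,b₂,γ)) : ℤ) : ℂ) *
            e2pi ((m₁:ℚ) * (((Pmap k ℓ μ (j,b₁,b₂,γ)).1 : ℚ) / (((2:ℤ)^k : ℤ) : ℚ)) +
              (m₂:ℚ) * (((Pmap k ℓ μ (j,b₁,b₂,γ)).2.2.1 : ℚ) / ((μ*2^ℓ : ℤ) : ℚ)))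
          else 0))
      = if j % 2 = ℓ % 2 then ((2:ℂ)^ℓ * ((σ:ℂ)^ℓ *
          (gaussGEta 1 k m₁ (k-j) * gaussGEta η₂ ℓ m₂ (j+2) +
            (-(μ:ℂ)) * gaussGEta (-1) k m₁ (k-j) * gaussGEta (-η₂) ℓ m₂ (j+2)))) else 0 := by
    intro j hjmem
    have hj : j < ℓ-1 := Finset.mem_range.1 hjmem
    have hγsum : (∑ γ ∈ Finset.range (2^(ℓ+2)),
        (if ((γ:ℕ) : ZMod 4) = -(μ:ZMod 4) then ((kron (γ:ℤ) 2 : ℤ) : ℂ)^(ℓ-j) else 0))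
        = if (ℓ-j) % 2 = 0 then ((2:ℂ)^ℓ) else 0 := by
      rw [show 2^(ℓ+2) = 8 * 2^(ℓ-1) by
        rw [show (8:ℕ) = 2^3 from rfl, ← pow_add]; congr 1; omega]
      rw [gamma_sum (ℓ-j) (2^(ℓ-1)) (-(μ:ZMod 4))
        (by rcases hμ with rfl | rfl
            · right; decide
            · left; decide)]
      split
      · push_cast
        rw [show (2:ℂ) * 2^(ℓ-1) = 2^(ℓ-1+1) by rw [pow_succ]; ring]
        congr 1
        omega
      · rfl
    calc (∑ b₁ ∈ Finset.range (2^k), ∑ b₂ ∈ Finset.range (2^ℓ), ∑ γ ∈ Finset.range (2^(ℓ+2)),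
        (if Fpred k ℓ μ (j,b₁,b₂,γ)
          then ((ssplit ((2:ℤ)^k) (μ*2^ℓ) (Pmap k ℓ μ (j,b₁,b₂,γ)) : ℤ) : ℂ) *
            e2pi ((m₁:ℚ) * (((Pmap k ℓ μ (j,b₁,b₂,γ)).1 : ℚ) / (((2:ℤ)^k : ℤ) : ℚ)) +
              (m₂:ℚ) * (((Pmap k ℓ μ (j,b₁,b₂,γ)).2.2.1 : ℚ) / ((μ*2^ℓ : ℤ) : ℚ)))
          else 0))
        = ∑ b₁ ∈ Finset.range (2^k), ∑ b₂ ∈ Finset.range (2^ℓ),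
            ((if Condb k ℓ j η₂ b₁ b₂ then Wb k ℓ j μ σ m₁ m₂ b₁ b₂ else 0) *
              (if (ℓ-j) % 2 = 0 then ((2:ℂ)^ℓ) else 0)) := by
          apply Finset.sum_congr rfl
          intro b₁ _
          apply Finset.sum_congr rfl
          intro b₂ _
          rw [← hγsum, Finset.mul_sum]
          apply Finset.sum_congr rfl
          intro γ _
          exact pointwise k ℓ hℓ2 hkℓ μ σ η₂ m₁ m₂ hμ hC hδ j b₁ b₂ γ hj
      _ = if j % 2 = ℓ % 2 then ((2:ℂ)^ℓ * ((σ:ℂ)^ℓ *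
          (gaussGEta 1 k m₁ (k-j) * gaussGEta η₂ ℓ m₂ (j+2) +
            (-(μ:ℂ)) * gaussGEta (-1) k m₁ (k-j) * gaussGEta (-η₂) ℓ m₂ (j+2)))) else 0 := by
          by_cases hpar : j % 2 = ℓ % 2
          · rw [if_pos hpar]
            have hp0 : (ℓ-j) % 2 = 0 := by omega
            simp only [if_pos hp0]
            rw [← bsum k ℓ j hℓ2 hkℓ hj hpar μ σ η₂ m₁ m₂ hμ hσ hη]
            rw [Finset.mul_sum]
            apply Finset.sum_congr rfl
            intro b₁ _
            rw [Finset.mul_sum]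
            apply Finset.sum_congr rfl
            intros
            ring
          · rw [if_neg hpar]
            have hp0 : ¬ (ℓ-j) % 2 = 0 := by omega
            simp only [if_neg hp0, mul_zero]
            simp
  rw [Finset.sum_congr rfl hstep]
  rw [← Finset.sum_filter]
  rw [Finset.mul_sum]
  apply Finset.sum_congr rfl
  intros
  ring

lemma tsum_plset_empty {S : Set (ℤ×ℤ×ℤ×ℤ)} (h : S = ∅) (g : ℤ×ℤ×ℤ×ℤ → ℂ) :
    ∑' (v : ↥S), g v.val = 0 := by
  subst h
  exact tsum_empty

lemma kron_shift (c d : ℤ) (h : (c - d) % 8 = 0) : kron c 2 = kron d 2 := by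
  rw [kron_two_emod, kron_two_emod d]
  congr 1
  omega

lemma kron_two_add_four (c : ℤ) (hc : c % 2 = 1) : kron (c+4) 2 = - kron c 2 := by
  rw [kron_two_emod, show (c+4)%8 = (c%8+4)%8 by omega, kron_two_emod c]
  have h1 : 0 ≤ c%8 ∧ c%8 < 8 ∧ (c%8)%2 = 1 := by omega
  obtain ⟨ha, hb, hcc⟩ := h1
  set a := c%8; clear_value a
  interval_cases a <;> first | omega | norm_num [kron_two]

lemma kron_two_add_six (c : ℤ) (hc : c % 4 = 3) : kron (c+6) 2 = - kron c 2 := by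
  rw [kron_two_emod, show (c+6)%8 = (c%8+6)%8 by omega, kron_two_emod c]
  have h1 : 0 ≤ c%8 ∧ c%8 < 8 ∧ (c%8)%4 = 3 := by omega
  obtain ⟨ha, hb, hcc⟩ := h1
  set a := c%8; clear_value a
  interval_cases a <;> first | omega | norm_num [kron_two]

lemma kron_two_add_two (c : ℤ) (hc : c % 4 = 3) : kron (c+2) 2 = kron c 2 := by
  rw [kron_two_emod, show (c+2)%8 = (c%8+2)%8 by omega, kron_two_emod c]
  have h1 : 0 ≤ c%8 ∧ c%8 < 8 ∧ (c%8)%4 = 3 := by omega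
  obtain ⟨ha, hb, hcc⟩ := h1
  set a := c%8; clear_value a
  interval_cases a <;> first | omega | norm_num [kron_two]


/-- Evaluation of `Σ(2^k, μ2^ℓ; m₁, m₂)` for `k > ℓ ≥ 0`. -/
theorem sigma_two_powers (k ℓ : ℕ) (hkℓ : ℓ < k) (μ : ℤ) (hμ : μ = 1 ∨ μ = -1)
    (m₁ m₂ : ℤ) :
    ((ℓ = 0 ∨ ℓ = 1) → SigmaExp ((2 : ℤ) ^ k) (μ * (2 : ℤ) ^ ℓ) m₁ m₂ = 0) ∧
    (2 ≤ ℓ → 3 ≤ k - ℓ →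
      SigmaExp ((2 : ℤ) ^ k) (μ * (2 : ℤ) ^ ℓ) m₁ m₂ =
        (2 : ℂ) ^ ℓ *
          ∑ i ∈ Finset.filter (fun i => i % 2 = ℓ % 2) (Finset.range (ℓ - 1)),
            (gaussGEta 1 k m₁ (k - i) * gaussGEta 1 ℓ m₂ (i + 2) +
              (-(μ : ℂ)) * gaussGEta (-1) k m₁ (k - i) * gaussGEta (-1) ℓ m₂ (i + 2))) ∧
    (2 ≤ ℓ → k - ℓ = 2 →
      SigmaExp ((2 : ℤ) ^ k) (μ * (2 : ℤ) ^ ℓ) m₁ m₂ =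
        (-1 : ℂ) ^ ℓ * (2 : ℂ) ^ ℓ *
          ∑ i ∈ Finset.filter (fun i => i % 2 = ℓ % 2) (Finset.range (ℓ - 1)),
            (gaussGEta 1 k m₁ (k - i) * gaussGEta 1 ℓ m₂ (i + 2) +
              (-(μ : ℂ)) * gaussGEta (-1) k m₁ (k - i) * gaussGEta (-1) ℓ m₂ (i + 2))) ∧
    (2 ≤ ℓ → k - ℓ = 1 →
      SigmaExp ((2 : ℤ) ^ k) (μ * (2 : ℤ) ^ ℓ) m₁ m₂ =
        (-(μ : ℂ)) ^ ℓ * (2 : ℂ) ^ ℓ *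
          ∑ i ∈ Finset.filter (fun i => i % 2 = ℓ % 2) (Finset.range (ℓ - 1)),
            (gaussGEta 1 k m₁ (k - i) * gaussGEta (-1) ℓ m₂ (i + 2) +
              (-(μ : ℂ)) * gaussGEta (-1) k m₁ (k - i) * gaussGEta 1 ℓ m₂ (i + 2))) := by
  refine ⟨?_, ?_, ?_, ?_⟩
  · -- empty case
    intro hl
    have hle : ℓ ≤ 1 := by rcases hl with rfl | rfl <;> omega
    unfold SigmaExp
    exact tsum_plset_empty (plset_empty k ℓ hle hkℓ μ hμ)
      (fun v => ((ssplit ((2:ℤ)^k) (μ*2^ℓ) v : ℤ) : ℂ) *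
        e2pi ((m₁:ℚ) * ((v.1 : ℚ) / (((2:ℤ)^k : ℤ) : ℚ)) +
          (m₂:ℚ) * ((v.2.2.1 : ℚ) / ((μ*2^ℓ : ℤ) : ℚ))))
  · -- k - ℓ ≥ 3
    intro hℓ2 hk3
    have hC : ∀ cI : ℤ, cI % 2 = 1 → ((cI : ZMod 4) = (((1:ℤ)) : ZMod 4)) →
        ∀ γ : ℕ, ((γ:ZMod 4) = -(μ:ZMod 4)) →
        kron (-((2:ℤ)^(k-ℓ)*γ + cI)) 2 = 1 * kron cI 2 := by
      intro cI hodd _ γ _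
      have h8 : (2:ℤ)^(k-ℓ) = 8 * 2^(k-ℓ-3) := by
        rw [show (8:ℤ) = 2^3 by norm_num, ← pow_add]
        congr 1
        omega
      rw [one_mul, h8]
      have hsh : kron (-(8 * 2^(k-ℓ-3) * (γ:ℤ) + cI)) 2 = kron (-cI) 2 := by
        apply kron_shift
        have hass : (8:ℤ) * 2^(k-ℓ-3) * (γ:ℤ) = 8 * (2^(k-ℓ-3) * (γ:ℤ)) := by ring
        rw [hass]
        generalize (2:ℤ)^(k-ℓ-3) * (γ:ℤ) = u
        omega
      rw [hsh, kron_two_neg]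
    have hδ : ∀ cI : ℤ, cI % 2 = 1 → ∀ γ : ℕ, ((γ:ZMod 4) = -(μ:ZMod 4)) →
        (((cI : ZMod 4) + 2^(k-ℓ) * ((γ:ℕ) : ZMod 4) = 1) ↔ ((cI : ZMod 4) = (((1:ℤ)) : ZMod 4))) := by
      intro cI _ γ _
      have hz : (2:ZMod 4)^(k-ℓ) = 0 := by
        rw [show k-ℓ = 2 + (k-ℓ-2) by omega, pow_add, show (2:ZMod 4)^2 = 0 by decide, zero_mul]
      rw [hz, zero_mul, add_zero, show (((1:ℤ)) : ZMod 4) = 1 by norm_num]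
    have hm := master k ℓ hℓ2 hkℓ μ hμ m₁ m₂ 1 1 (Or.inl rfl) (Or.inl rfl) hC hδ
    rw [hm]
    norm_num
  · -- k - ℓ = 2
    intro hℓ2 hk2
    have hC : ∀ cI : ℤ, cI % 2 = 1 → ((cI : ZMod 4) = (((1:ℤ)) : ZMod 4)) →
        ∀ γ : ℕ, ((γ:ZMod 4) = -(μ:ZMod 4)) →
        kron (-((2:ℤ)^(k-ℓ)*γ + cI)) 2 = (-1) * kron cI 2 := by
      intro cI hodd _ γ hγc
      have hγ2 : γ % 2 = 1 := by
        have := gamma_mod μ hμ γ hγc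
        rcases hμ with rfl | rfl <;> simp at this <;> omega
      have h4 : (2:ℤ)^(k-ℓ) = 4 := by rw [hk2]; norm_num
      rw [h4]
      obtain ⟨u, hu⟩ : ∃ u:ℤ, (γ:ℤ) = 2*u + 1 := by
        have : (γ:ℤ) % 2 = 1 := by exact_mod_cast hγ2
        exact ⟨(γ:ℤ)/2, by omega⟩
      have hsh : kron (-(4*(γ:ℤ) + cI)) 2 = kron (-(cI + 4)) 2 := by
        apply kron_shift
        rw [hu]
        ring_nf
        omega
      rw [hsh, kron_two_neg, kron_two_add_four cI hodd]
      ring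
    have hδ : ∀ cI : ℤ, cI % 2 = 1 → ∀ γ : ℕ, ((γ:ZMod 4) = -(μ:ZMod 4)) →
        (((cI : ZMod 4) + 2^(k-ℓ) * ((γ:ℕ) : ZMod 4) = 1) ↔ ((cI : ZMod 4) = (((1:ℤ)) : ZMod 4))) := by
      intro cI _ γ _
      have hz : (2:ZMod 4)^(k-ℓ) = 0 := by
        rw [show k-ℓ = 2 + (k-ℓ-2) by omega, pow_add, show (2:ZMod 4)^2 = 0 by decide, zero_mul]
      rw [hz, zero_mul, add_zero, show (((1:ℤ)) : ZMod 4) = 1 by norm_num]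
    have hm := master k ℓ hℓ2 hkℓ μ hμ m₁ m₂ (-1) 1 (Or.inr rfl) (Or.inl rfl) hC hδ
    rw [hm]
    push_cast
    ring
  · -- k - ℓ = 1
    intro hℓ2 hk1
    have hσ : -μ = 1 ∨ -μ = -1 := by rcases hμ with rfl | rfl <;> [right; left] <;> norm_num
    have hC : ∀ cI : ℤ, cI % 2 = 1 → ((cI : ZMod 4) = (((-1:ℤ)) : ZMod 4)) →
        ∀ γ : ℕ, ((γ:ZMod 4) = -(μ:ZMod 4)) →
        kron (-((2:ℤ)^(k-ℓ)*γ + cI)) 2 = (-μ) * kron cI 2 := by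
      intro cI hodd hclass γ hγc
      have hcI4 : cI % 4 = 3 := by
        have h := (ZMod.intCast_eq_intCast_iff cI (-1) 4).1 (by exact_mod_cast hclass)
        unfold Int.ModEq at h
        omega
      have hγ4 := gamma_mod μ hμ γ hγc
      rw [hk1, pow_one]
      rcases hμ with rfl | rfl
      · rw [if_pos rfl] at hγ4
        obtain ⟨u, hu⟩ : ∃ u:ℤ, (γ:ℤ) = 4*u + 3 := by
          have : (γ:ℤ) % 4 = 3 := by exact_mod_cast hγ4
          exact ⟨(γ:ℤ)/4, by omega⟩
        have hsh : kron (-(2*(γ:ℤ) + cI)) 2 = kron (-(cI + 6)) 2 := by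
          apply kron_shift
          rw [hu]
          ring_nf
          omega
        rw [hsh, kron_two_neg, kron_two_add_six cI hcI4]
        ring
      · rw [if_neg (by norm_num)] at hγ4
        obtain ⟨u, hu⟩ : ∃ u:ℤ, (γ:ℤ) = 4*u + 1 := by
          have : (γ:ℤ) % 4 = 1 := by exact_mod_cast hγ4
          exact ⟨(γ:ℤ)/4, by omega⟩
        have hsh : kron (-(2*(γ:ℤ) + cI)) 2 = kron (-(cI + 2)) 2 := by
          apply kron_shift
          rw [hu]
          ring_nf
          omega
        rw [hsh, kron_two_neg, kron_two_add_two cI hcI4]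
        norm_num
    have hδ : ∀ cI : ℤ, cI % 2 = 1 → ∀ γ : ℕ, ((γ:ZMod 4) = -(μ:ZMod 4)) →
        (((cI : ZMod 4) + 2^(k-ℓ) * ((γ:ℕ) : ZMod 4) = 1) ↔ ((cI : ZMod 4) = (((-1:ℤ)) : ZMod 4))) := by
      intro cI _ γ hγc
      have h40 : (4:ZMod 4) = 0 := by decide
      rw [hk1, pow_one, hγc]
      rcases hμ with rfl | rfl <;> push_cast <;> constructor <;> intro h <;>
        first
          | linear_combination h
          | linear_combination h + h40
          | linear_combination h - h40
    have hm := master k ℓ hℓ2 hkℓ μ hμ m₁ m₂ (-μ) (-1) hσ (Or.inr rfl) hC hδ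
    rw [show (-(-1:ℤ)) = 1 by norm_num] at hm
    rw [hm]
    push_cast
    ring
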